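/- arXiv:1506.07793 — 12 statements merged into one kernel-verified Lean document; each statement's English description precedes it below -/
import Mathlib

section
/- Let t, A, B be complex numbers and R > 0 a real number. Then the counterclockwise circle integral over the circle {z ∈ ℂ : |z| = R} of the function z ↦ t·e^{iz}·((z−A)/z)·(1 + B/z) equals −2πi·t·(A − B + i·A·B). (Equivalently, with the circle oriented as the boundary of the exterior domain D(∞,R), the integral equals 2πi·t·(A − B + i·A·B), which is the value of ∮_{∂_R} g·dh for the Weierstrass data g(z) = t·e^{iz}(z−A)/z, dh = (1 + B/z)dz.) -/
open Complex

lemma deriv_aux (t A B : ℂ) :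
    HasDerivAt (fun z : ℂ => t * Complex.exp (Complex.I * z) * ((z - A) * (z + B)))
      (-(t * (A - B + Complex.I * A * B))) 0 := by
  have h1 : HasDerivAt (fun z : ℂ => t * Complex.exp (Complex.I * z)) (t * Complex.I) 0 := by
    have := ((Complex.hasDerivAt_exp (Complex.I * 0)).comp 0
      ((hasDerivAt_id (0:ℂ)).const_mul Complex.I)).const_mul t
    simpa using this
  have h2 : HasDerivAt (fun z : ℂ => (z - A) * (z + B)) (B - A) 0 := by
    have := ((hasDerivAt_id (0:ℂ)).sub_const A).fun_mul ((hasDerivAt_id (0:ℂ)).add_const B)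
    simpa [sub_eq_add_neg] using this
  have := h1.fun_mul h2
  refine this.congr_deriv ?_
  simp only [mul_zero, Complex.exp_zero, mul_one, zero_sub, zero_add]
  ring

/-- The counterclockwise circle integral over `{|z| = R}` of
`z ↦ t·e^{iz}·((z−A)/z)·(1 + B/z)` equals `−2πi·t·(A − B + i·A·B)`. -/
theorem stmt0 (t A B : ℂ) (R : ℝ) (hR : 0 < R) :
    (∮ z in C(0, R), t * Complex.exp (Complex.I * z) * ((z - A) / z) * (1 + B / z)) =
      -(2 * Real.pi * Complex.I) * t * (A - B + Complex.I * A * B) := by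
  set f : ℂ → ℂ := fun z => t * Complex.exp (Complex.I * z) * ((z - A) * (z + B)) with hf
  have hdiff : DifferentiableOn ℂ f Set.univ := by
    apply Differentiable.differentiableOn
    fun_prop
  have key := Complex.two_pi_I_inv_smul_circleIntegral_sub_sq_inv_smul_of_differentiable
    isOpen_univ (c := 0) (w₀ := 0) (R := R) (f := f) (Set.subset_univ _) hdiff
    (Metric.mem_ball_self hR)
  have hderiv : deriv f 0 = -(t * (A - B + Complex.I * A * B)) := (deriv_aux t A B).deriv
  have hcongr : (∮ z in C(0, R), t * Complex.exp (Complex.I * z) * ((z - A) / z) * (1 + B / z))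
      = ∮ z in C(0, R), ((z - 0) ^ 2)⁻¹ • f z := by
    apply circleIntegral.integral_congr hR.le
    intro z hz
    have hz0 : z ≠ 0 := by
      intro h
      simp [h, Metric.sphere, abs_of_pos hR] at hz
      exact hR.ne' hz.symm
    simp only [hf, sub_zero, smul_eq_mul]
    field_simp
  rw [hcongr]
  have h2 : (2 * (Real.pi : ℂ) * Complex.I) ≠ 0 := by
    simp [Real.pi_ne_zero, Complex.I_ne_zero, Complex.ofReal_ne_zero]
  have := key
  rw [hderiv] at this
  have : (∮ z in C(0, R), ((z - 0) ^ 2)⁻¹ • f z)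
      = (2 * (Real.pi : ℂ) * Complex.I) * (-(t * (A - B + Complex.I * A * B))) := by
    rw [← this, smul_eq_mul, ← mul_assoc, mul_inv_cancel₀ h2, one_mul]
  rw [this]; ring
end

section
/- Let t be a nonzero complex number, A, B complex numbers, and R a real number with R > |A|. Then the counterclockwise circle integral over the circle {z ∈ ℂ : |z| = R} of the function z ↦ (1/t)·e^{−iz}·(z/(z−A))·(1 + B/z) equals 2πi·(A + B)·e^{−iA}/t. (With the circle oriented as the boundary of the exterior domain D(∞,R), the integral equals −2πi·(A+B)/(t·e^{iA}), which is the value of ∮_{∂_R} dh/g for the Weierstrass data g(z) = t·e^{iz}(z−A)/z, dh = (1 + B/z)dz.) -/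
open Complex

/-- For `t ≠ 0` and `R > |A|`, the counterclockwise circle integral over `{|z| = R}` of
`z ↦ (1/t)·e^{−iz}·(z/(z−A))·(1 + B/z)` equals `2πi·(A + B)·e^{−iA}/t`. -/
theorem stmt1 (t : ℂ) (ht : t ≠ 0) (A B : ℂ) (R : ℝ) (hR : ‖A‖ < R) :
    (∮ z in C(0, R), (1 / t) * Complex.exp (-(Complex.I * z)) * (z / (z - A)) * (1 + B / z)) =
      2 * Real.pi * Complex.I * (A + B) * Complex.exp (-(Complex.I * A)) / t := by
  have hR0 : 0 < R := lt_of_le_of_lt (norm_nonneg A) hR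
  set f : ℂ → ℂ := fun z => (1 / t) * Complex.exp (-(Complex.I * z)) * (z + B)
  have hf : DiffContOnCl ℂ f (Metric.ball (0 : ℂ) R) := by
    apply Differentiable.diffContOnCl
    fun_prop
  have hA : A ∈ Metric.ball (0 : ℂ) R := by
    simpa [Metric.mem_ball, Complex.dist_eq] using hR
  have key := hf.circleIntegral_sub_inv_smul hA
  have hcong : (∮ z in C(0, R),
      (1 / t) * Complex.exp (-(Complex.I * z)) * (z / (z - A)) * (1 + B / z)) =
      ∮ z in C(0, R), (z - A)⁻¹ • f z := by
    apply circleIntegral.integral_congr hR0.le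
    intro z hz
    have habs : ‖z‖ = R := by
      simpa [Complex.dist_eq] using hz
    have hz0 : z ≠ 0 := by
      intro h
      rw [h] at habs
      simp at habs
      exact hR0.ne habs
    have hzA : z - A ≠ 0 := by
      rw [sub_ne_zero]
      intro h
      rw [← h, habs] at hR
      exact lt_irrefl _ hR
    simp only [f, smul_eq_mul]
    field_simp
  rw [hcong, key]
  simp only [f, smul_eq_mul]
  field_simp
end

section
/- Let t > 0 be real, B a real number, A a nonzero complex number, and R > |A| a real number. Set g(z) = t·e^{iz}(z−A)/z and consider the one-form dh = (1 + B/z)dz. Then the horizontal period condition, namely that the complex conjugate of the counterclockwise circle integral ∮_{|z|=R} g(z)(1 + B/z) dz equals the counterclockwise circle integral ∮_{|z|=R} (1/g(z))(1 + B/z) dz, holds if and only if t²·(A·(1 + iB) − B) = (conj(A) + B)·e^{i·conj(A)}. -/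
open Complex Metric


lemma sphere_ne_zero' {R : ℝ} (hR : 0 < R) {z : ℂ} (hz : z ∈ sphere (0:ℂ) R) : z ≠ 0 := by
  rw [mem_sphere_zero_iff_norm] at hz
  intro h; rw [h] at hz; simp at hz; exact hR.ne' hz.symm

lemma hE0' (R : ℝ) (hR : 0 ≤ R) : (∮ z in C(0, R), Complex.exp (I * z)) = 0 := by
  refine circleIntegral.integral_eq_zero_of_hasDerivWithinAt hR
    (f := fun z => -I * Complex.exp (I * z)) ?_
  intro z _
  have h : HasDerivAt (fun z => -I * Complex.exp (I * z)) (-I * (Complex.exp (I * z) * I)) z :=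
    (((hasDerivAt_id z).const_mul I).congr_deriv (mul_one I)).cexp.const_mul (-I)
  have h2 : -I * (Complex.exp (I * z) * I) = Complex.exp (I * z) := by
    ring_nf; rw [Complex.I_sq]; ring
  exact (h.congr_deriv h2).hasDerivWithinAt

lemma hE1' (R : ℝ) (hR : 0 < R) :
    (∮ z in C(0, R), z⁻¹ * Complex.exp (I * z)) = 2 * (Real.pi:ℂ) * I := by
  have hd : DiffContOnCl ℂ (fun z => Complex.exp (I * z)) (ball (0:ℂ) R) :=
    Differentiable.diffContOnCl (by fun_prop)
  have := hd.circleIntegral_sub_inv_smul (w := 0) (by simpa using hR)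
  simpa [smul_eq_mul] using this

lemma hE2' (R : ℝ) (hR : 0 < R) :
    (∮ z in C(0, R), (z^2)⁻¹ * Complex.exp (I * z)) = -(2 * (Real.pi:ℂ)) := by
  have hder : ∀ z ∈ sphere (0:ℂ) R,
      HasDerivWithinAt (fun z => -(z⁻¹ * Complex.exp (I * z)))
        ((z^2)⁻¹ * Complex.exp (I * z) - I * (z⁻¹ * Complex.exp (I * z))) (sphere (0:ℂ) R) z := by
    intro z hz
    have hz0 := sphere_ne_zero' hR hz
    have h1 : HasDerivAt (fun z : ℂ => z⁻¹ * Complex.exp (I * z))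
        (-(z^2)⁻¹ * Complex.exp (I * z) + z⁻¹ * (Complex.exp (I * z) * I)) z :=
      (hasDerivAt_inv hz0).mul
        ((((hasDerivAt_id z).const_mul I).congr_deriv (mul_one I)).cexp)
    exact (h1.neg.congr_deriv (by ring)).hasDerivWithinAt
  have hzero := circleIntegral.integral_eq_zero_of_hasDerivWithinAt hR.le hder
  have hi1 : CircleIntegrable (fun z : ℂ => I * (z⁻¹ * Complex.exp (I * z))) 0 R :=
    ContinuousOn.circleIntegrable hR.le
      (continuousOn_const.mul
        ((continuousOn_id.inv₀ fun z hz => sphere_ne_zero' hR hz).mul (by fun_prop)))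
  have hi2 : CircleIntegrable (fun z : ℂ => (z^2)⁻¹ * Complex.exp (I * z)) 0 R :=
    ContinuousOn.circleIntegrable hR.le
      (((continuousOn_id.pow 2).inv₀ fun z hz => pow_ne_zero 2 (sphere_ne_zero' hR hz)).mul
        (by fun_prop))
  have hsub := circleIntegral.integral_sub hi2 hi1
  rw [hzero] at hsub
  have hsmul := circleIntegral.integral_smul I (fun z : ℂ => z⁻¹ * Complex.exp (I * z)) 0 R
  simp only [smul_eq_mul] at hsmul
  have := sub_eq_zero.mp hsub.symm
  rw [this, hsmul, hE1' R hR]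
  rw [show I * (2 * (Real.pi:ℂ) * I) = 2*(Real.pi:ℂ)*(I*I) by ring, Complex.I_mul_I]; ring

lemma circleIntegral_neg' (f : ℂ → ℂ) (c : ℂ) (R : ℝ) :
    (∮ z in C(c, R), -(f z)) = -(∮ z in C(c, R), f z) := by
  simpa using circleIntegral.integral_smul (-1 : ℂ) f c R

lemma circleIntegral_add' {f g : ℂ → ℂ} {c : ℂ} {R : ℝ} (hf : CircleIntegrable f c R)
    (hg : CircleIntegrable g c R) :
    (∮ z in C(c, R), (f z + g z)) = (∮ z in C(c, R), f z) + ∮ z in C(c, R), g z := by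
  have h := circleIntegral.integral_sub hf hg.neg
  simp only [Pi.neg_apply, sub_neg_eq_add] at h
  rw [h, circleIntegral_neg' g c R]; ring

/-- For `g(z) = t·e^{iz}(z−A)/z` (with `t > 0` real, `A ≠ 0`) and `dh = (1 + B/z)dz`
(with `B` real), the horizontal period condition `conj(∮ g·dh) = ∮ dh/g` along the
circle `{|z| = R}`, `R > |A|`, holds if and only if
`t²·(A·(1 + iB) − B) = (conj(A) + B)·e^{i·conj(A)}`. -/
theorem stmt2 (t : ℝ) (ht : 0 < t) (B : ℝ) (A : ℂ) (hA : A ≠ 0) (R : ℝ)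
    (hR : ‖A‖ < R) :
    ((starRingEnd ℂ)
        (∮ z in C(0, R), (t : ℂ) * Complex.exp (Complex.I * z) * ((z - A) / z) * (1 + (B : ℂ) / z))
      = ∮ z in C(0, R),
          (1 / ((t : ℂ) * Complex.exp (Complex.I * z) * ((z - A) / z))) * (1 + (B : ℂ) / z))
    ↔ (t : ℂ) ^ 2 * (A * (1 + Complex.I * (B : ℂ)) - (B : ℂ))
        = ((starRingEnd ℂ) A + (B : ℂ)) * Complex.exp (Complex.I * (starRingEnd ℂ) A) := by
  have hR0 : 0 < R := lt_of_le_of_lt (norm_nonneg A) hR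
  have hzero : ∀ z ∈ sphere (0:ℂ) R, z ≠ 0 := fun z hz => sphere_ne_zero' hR0 hz
  have hzA : ∀ z ∈ sphere (0:ℂ) R, z ≠ A := by
    intro z hz
    rw [mem_sphere_zero_iff_norm] at hz
    intro h; rw [h] at hz; exact absurd hz hR.ne
  have ht0 : (t:ℂ) ≠ 0 := by exact_mod_cast ht.ne'
  -- first integral
  have heq1 : Set.EqOn
      (fun z : ℂ => (t : ℂ) * Complex.exp (I * z) * ((z - A) / z) * (1 + (B : ℂ) / z))
      (fun z : ℂ => (t:ℂ) * Complex.exp (I * z) + ((t:ℂ)*((B:ℂ)-A)) * (z⁻¹ * Complex.exp (I * z))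
        + (-((t:ℂ)*A*B)) * ((z^2)⁻¹ * Complex.exp (I * z))) (sphere (0:ℂ) R) := by
    intro z hz
    have hz0 := hzero z hz
    field_simp
    ring
  have hi0 : CircleIntegrable (fun z : ℂ => (t:ℂ) * Complex.exp (I * z)) 0 R :=
    ContinuousOn.circleIntegrable hR0.le (by fun_prop)
  have hi1 : CircleIntegrable
      (fun z : ℂ => ((t:ℂ)*((B:ℂ)-A)) * (z⁻¹ * Complex.exp (I * z))) 0 R :=
    ContinuousOn.circleIntegrable hR0.le
      (continuousOn_const.mul ((continuousOn_id.inv₀ hzero).mul (by fun_prop)))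
  have hi2 : CircleIntegrable
      (fun z : ℂ => (-((t:ℂ)*A*B)) * ((z^2)⁻¹ * Complex.exp (I * z))) 0 R :=
    ContinuousOn.circleIntegrable hR0.le
      (continuousOn_const.mul
        (((continuousOn_id.pow 2).inv₀ fun z hz => pow_ne_zero 2 (hzero z hz)).mul (by fun_prop)))
  have hi01 : CircleIntegrable (fun z : ℂ => (t:ℂ) * Complex.exp (I * z)
      + ((t:ℂ)*((B:ℂ)-A)) * (z⁻¹ * Complex.exp (I * z))) 0 R := hi0.add hi1
  have hI1 : (∮ z in C(0, R), (t : ℂ) * Complex.exp (I * z) * ((z - A) / z) * (1 + (B : ℂ) / z))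
      = ((t:ℂ)*((B:ℂ)-A)) * (2 * (Real.pi:ℂ) * I)
        + (-((t:ℂ)*A*B)) * (-(2 * (Real.pi:ℂ))) := by
    rw [circleIntegral.integral_congr hR0.le heq1, circleIntegral_add' hi01 hi2,
      circleIntegral_add' hi0 hi1,
      circleIntegral.integral_const_mul, circleIntegral.integral_const_mul,
      circleIntegral.integral_const_mul, hE0' R hR0.le, hE1' R hR0, hE2' R hR0]
    ring
  -- second integral
  have heq2 : Set.EqOn
      (fun z : ℂ => (1 / ((t : ℂ) * Complex.exp (I * z) * ((z - A) / z))) * (1 + (B : ℂ) / z))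
      (fun z : ℂ => (z - A)⁻¹ • ((t:ℂ)⁻¹ * (Complex.exp (I * z))⁻¹ * (z + B)))
      (sphere (0:ℂ) R) := by
    intro z hz
    have hz0 := hzero z hz
    have hzA' : z - A ≠ 0 := sub_ne_zero.mpr (hzA z hz)
    have he : Complex.exp (I * z) ≠ 0 := Complex.exp_ne_zero _
    simp only [smul_eq_mul]
    field_simp
  have hd2 : DiffContOnCl ℂ (fun z : ℂ => (t:ℂ)⁻¹ * (Complex.exp (I * z))⁻¹ * (z + B))
      (ball (0:ℂ) R) := by
    apply Differentiable.diffContOnCl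
    apply Differentiable.mul _ (by fun_prop)
    exact (differentiable_const _).mul
      ((Complex.differentiable_exp.comp (by fun_prop)).inv fun z => Complex.exp_ne_zero _)
  have hI2 : (∮ z in C(0, R),
        (1 / ((t : ℂ) * Complex.exp (I * z) * ((z - A) / z))) * (1 + (B : ℂ) / z))
      = (2 * (Real.pi:ℂ) * I) * ((t:ℂ)⁻¹ * (Complex.exp (I * A))⁻¹ * (A + B)) := by
    rw [circleIntegral.integral_congr hR0.le heq2]
    have := hd2.circleIntegral_sub_inv_smul (w := A)
      (by simpa [mem_ball_zero_iff] using hR)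
    simpa [smul_eq_mul] using this
  rw [hI1, hI2]
  have hconj : ∀ x y : ℂ, ((starRingEnd ℂ) x = y) ↔ (x = (starRingEnd ℂ) y) := by
    intro x y
    constructor
    · intro h; rw [← h, Complex.conj_conj]
    · intro h; rw [h, Complex.conj_conj]
  rw [hconj]
  simp only [map_mul, map_add, map_inv₀, map_ofNat, conj_I, Complex.conj_ofReal,
    ← Complex.exp_conj, map_mul, conj_I, neg_mul, Complex.exp_neg, inv_inv]
  have hpi : ((Real.pi:ℂ)) ≠ 0 := Complex.ofReal_ne_zero.mpr Real.pi_ne_zero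
  have h2pi : (2*(Real.pi:ℂ)*I) ≠ 0 := by
    simp [hpi, Complex.I_ne_zero]
  constructor
  · intro h
    field_simp at h
    refine mul_left_cancel₀ h2pi ?_
    linear_combination (2*(Real.pi:ℂ)*I*I)*h + (2*(Real.pi:ℂ)*I*((t:ℂ)^2*(A-B) - ((starRingEnd ℂ) A + B)*Complex.exp (I*(starRingEnd ℂ) A)))*Complex.I_sq
  · intro h
    field_simp
    linear_combination (-I)*h + ((t:ℂ)^2*A*B)*Complex.I_sq
end

section
/- For every real B ≥ 0 there exists a real x₀ > B/(1+B²) such that for every y ∈ ℝ and every x > x₀ the following strict inequality holds: Im(conj(L(x))·(1 + iB)) / |L(x)|² < 1 + y/((x+B)² + y²), where L(x) = (x − B·y − B) + i·(B·x + y). (The left-hand side is the derivative θ_L'(x) of a continuous argument of the curve x ↦ L(x), and the right-hand side is the derivative θ_R'(x) of θ_R(x) = x − arctan(y/(x+B)), a continuous argument of the curve x ↦ ((x+B) − iy)e^{ix}.) -/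
open Complex

/-- Assertion 6.1: for every `B ≥ 0` there exists `x₀ > B/(1+B²)` such that for all
`y ∈ ℝ` and all `x > x₀`, the derivative of a continuous argument of
`L(x) = (x − By − B) + i(Bx + y)`, namely `Im(conj(L(x))·(1 + iB))/|L(x)|²`, is
strictly smaller than `1 + y/((x+B)² + y²)`, the derivative of a continuous argument of
`R(x) = ((x+B) − iy)e^{ix}`. -/
theorem stmt4 (B : ℝ) (hB : 0 ≤ B) :
    ∃ x₀ : ℝ, B / (1 + B ^ 2) < x₀ ∧ ∀ y x : ℝ, x₀ < x →
      ((starRingEnd ℂ) (((x - B * y - B : ℝ) : ℂ) + Complex.I * ((B * x + y : ℝ) : ℂ)) *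
          (1 + Complex.I * (B : ℂ))).im /
        ‖((x - B * y - B : ℝ) : ℂ) + Complex.I * ((B * x + y : ℝ) : ℂ)‖ ^ 2
      < 1 + y / ((x + B) ^ 2 + y ^ 2) := by
  have hc : (0:ℝ) < 1 + B ^ 2 := by positivity
  refine ⟨B / (1 + B ^ 2) + 2, by linarith, ?_⟩
  intro y x hx
  set s : ℝ := x - B / (1 + B ^ 2) with hsdef
  set u : ℝ := y + B ^ 2 / (1 + B ^ 2) with hudef
  have hs2 : 2 < s := by rw [hsdef]; linarith
  clear_value s u
  have hxB : 2 < x + B := by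
    have h0 : 0 ≤ B / (1 + B ^ 2) := by positivity
    linarith
  have him : ((starRingEnd ℂ) (((x - B * y - B : ℝ) : ℂ) + Complex.I * ((B * x + y : ℝ) : ℂ)) *
      (1 + Complex.I * (B : ℂ))).im = -((1 + B ^ 2) * u) := by
    simp [Complex.mul_im, Complex.add_im, Complex.add_re, hudef]
    field_simp
    ring
  have habs : ‖((x - B * y - B : ℝ) : ℂ) + Complex.I * ((B * x + y : ℝ) : ℂ)‖ ^ 2
      = (1 + B ^ 2) * (s ^ 2 + u ^ 2) := by
    rw [← Complex.normSq_eq_norm_sq]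
    simp [Complex.normSq_apply, hsdef, hudef]
    field_simp
    ring
  rw [him, habs]
  have hD : 0 < (1 + B ^ 2) * (s ^ 2 + u ^ 2) := by nlinarith
  have hL : -((1 + B ^ 2) * u) / ((1 + B ^ 2) * (s ^ 2 + u ^ 2)) < 1 / 4 := by
    rw [div_lt_iff₀ hD]
    nlinarith [mul_nonneg hc.le (sq_nonneg (u + 2)),
      mul_pos hc (show (0:ℝ) < s ^ 2 - 4 by nlinarith)]
  have hR : (3:ℝ) / 4 < 1 + y / ((x + B) ^ 2 + y ^ 2) := by
    have hd : 0 < (x + B) ^ 2 + y ^ 2 := by nlinarith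
    have : -(1/4 : ℝ) < y / ((x + B) ^ 2 + y ^ 2) := by
      rw [lt_div_iff₀ hd]
      nlinarith [sq_nonneg (y + 2)]
    linarith
  linarith
end

section
/- For every real B ≥ 0 and every real y, there exist a real number x > B/(1+B²) and a real number s > 0 such that ((x + B) − i·y)·e^{ix} = s·((x − B·y − B) + i·(B·x + y)). -/
open Complex

private noncomputable def stmt5R (B y x : ℝ) : ℝ :=
  (x + B) * (x - B * y - B) - y * (B * x + y)

private noncomputable def stmt5G (B y x : ℝ) : ℝ :=
  (x - B * y - B) * ((x + B) * Real.sin x - y * Real.cos x)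
    - (B * x + y) * ((x + B) * Real.cos x + y * Real.sin x)

private lemma stmt5_expand (A yy t : ℝ) :
    (((A : ℝ) : ℂ) - Complex.I * (yy : ℂ)) * Complex.exp (Complex.I * (t : ℂ))
      = ((A * Real.cos t + yy * Real.sin t : ℝ) : ℂ)
        + ((A * Real.sin t - yy * Real.cos t : ℝ) : ℂ) * Complex.I := by
  rw [mul_comm Complex.I (t : ℂ), Complex.exp_mul_I, ← Complex.ofReal_cos, ← Complex.ofReal_sin]
  apply Complex.ext <;> simp <;> ring

private lemma stmt5_mul_I_eq (p q c d s : ℝ) (h1 : p = s * c) (h2 : q = s * d) :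
    ((p : ℝ) : ℂ) + ((q : ℝ) : ℂ) * Complex.I
      = (s : ℂ) * (((c : ℝ) : ℂ) + Complex.I * ((d : ℝ) : ℂ)) := by
  rw [h1, h2]; push_cast; ring

set_option maxHeartbeats 1000000 in
/-- Assertion 6.2 (existence part): for every `B ≥ 0` and `y ∈ ℝ` there exist
`x > B/(1+B²)` and `s > 0` with `((x+B) − iy)e^{ix} = s·((x − By − B) + i(Bx + y))`. -/
theorem stmt5 (B : ℝ) (hB : 0 ≤ B) (y : ℝ) :
    ∃ x : ℝ, B / (1 + B ^ 2) < x ∧ ∃ s : ℝ, 0 < s ∧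
      (((x + B : ℝ) : ℂ) - Complex.I * (y : ℂ)) * Complex.exp (Complex.I * (x : ℂ))
        = (s : ℂ) * (((x - B * y - B : ℝ) : ℂ) + Complex.I * ((B * x + y : ℝ) : ℂ)) := by
  have hπ : (3 : ℝ) < Real.pi := Real.pi_gt_three
  have hy1 : y ≤ |y| := le_abs_self y
  have hy0 : (0 : ℝ) ≤ |y| := abs_nonneg y
  have hC1 : (1 : ℝ) ≤ 1 + 2 * B * |y| + B ^ 2 * |y| + B ^ 2 + y ^ 2 := by
    have h1 : 0 ≤ 2 * B * |y| := by positivity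
    have h2 : 0 ≤ B ^ 2 * |y| := by positivity
    nlinarith [sq_nonneg B, sq_nonneg y]
  set C : ℝ := 1 + 2 * B * |y| + B ^ 2 * |y| + B ^ 2 + y ^ 2 with hCdef
  -- positivity of R on [C, ∞)
  have hRpos : ∀ x : ℝ, C ≤ x → 0 < stmt5R B y x := by
    intro x hx
    have hx1 : (1 : ℝ) ≤ x := le_trans hC1 hx
    have hx0 : (0 : ℝ) ≤ x := by linarith
    rw [hCdef] at hx
    have key : (1 + 2 * B * |y| + B ^ 2 * |y| + B ^ 2 + y ^ 2) * x ≤ x * x :=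
      mul_le_mul_of_nonneg_right hx hx0
    have ha : B ^ 2 ≤ B ^ 2 * x := le_mul_of_one_le_right (sq_nonneg B) hx1
    have hb : y ^ 2 ≤ y ^ 2 * x := le_mul_of_one_le_right (sq_nonneg y) hx1
    have hc0 : B ^ 2 * y ≤ B ^ 2 * |y| :=
      mul_le_mul_of_nonneg_left hy1 (sq_nonneg B)
    have hc1 : B ^ 2 * |y| ≤ B ^ 2 * |y| * x :=
      le_mul_of_one_le_right (by positivity) hx1
    have hd : 2 * B * x * y ≤ 2 * B * |y| * x := by
      nlinarith [mul_nonneg (mul_nonneg (by linarith : (0:ℝ) ≤ 2 * B) hx0)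
        (by linarith : (0:ℝ) ≤ |y| - y)]
    rw [stmt5R]
    nlinarith [key, ha, hb, hc0, hc1, hd]
  clear_value C
  -- choose k
  obtain ⟨k, hk⟩ : ∃ k : ℕ, C + Real.pi / 2 ≤ 2 * Real.pi * k := by
    refine ⟨⌈C⌉₊ + 1, ?_⟩
    have hm0 : (0 : ℝ) ≤ (⌈C⌉₊ : ℝ) := Nat.cast_nonneg _
    have hmC : C ≤ (⌈C⌉₊ : ℝ) := Nat.le_ceil C
    have hprod : (0 : ℝ) ≤ (2 * Real.pi - 1) * (⌈C⌉₊ : ℝ) :=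
      mul_nonneg (by linarith) hm0
    push_cast
    nlinarith [hprod]
  have hlC : C ≤ 2 * Real.pi * k - Real.pi / 2 := by linarith
  have hlr : 2 * Real.pi * k - Real.pi / 2 ≤ 2 * Real.pi * k + Real.pi / 2 := by linarith
  -- trig values at endpoints
  have hsinl : Real.sin (2 * Real.pi * k - Real.pi / 2) = -1 := by
    have h : 2 * Real.pi * k - Real.pi / 2 = -(Real.pi / 2) + (k : ℤ) * (2 * Real.pi) := by
      push_cast; ring
    rw [h, Real.sin_add_int_mul_two_pi, Real.sin_neg, Real.sin_pi_div_two]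
  have hcosl : Real.cos (2 * Real.pi * k - Real.pi / 2) = 0 := by
    have h : 2 * Real.pi * k - Real.pi / 2 = -(Real.pi / 2) + (k : ℤ) * (2 * Real.pi) := by
      push_cast; ring
    rw [h, Real.cos_add_int_mul_two_pi, Real.cos_neg, Real.cos_pi_div_two]
  have hsinr : Real.sin (2 * Real.pi * k + Real.pi / 2) = 1 := by
    have h : 2 * Real.pi * k + Real.pi / 2 = Real.pi / 2 + (k : ℤ) * (2 * Real.pi) := by
      push_cast; ring
    rw [h, Real.sin_add_int_mul_two_pi, Real.sin_pi_div_two]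
  have hcosr : Real.cos (2 * Real.pi * k + Real.pi / 2) = 0 := by
    have h : 2 * Real.pi * k + Real.pi / 2 = Real.pi / 2 + (k : ℤ) * (2 * Real.pi) := by
      push_cast; ring
    rw [h, Real.cos_add_int_mul_two_pi, Real.cos_pi_div_two]
  -- the function G and IVT
  have hGcont : Continuous (stmt5G B y) := by
    unfold stmt5G; continuity
  have hRl := hRpos _ hlC
  have hRr := hRpos _ (le_trans hlC hlr)
  have hGl : stmt5G B y (2 * Real.pi * k - Real.pi / 2)
      = - stmt5R B y (2 * Real.pi * k - Real.pi / 2) := by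
    rw [stmt5G, stmt5R, hsinl, hcosl]; ring
  have hGr : stmt5G B y (2 * Real.pi * k + Real.pi / 2)
      = stmt5R B y (2 * Real.pi * k + Real.pi / 2) := by
    rw [stmt5G, stmt5R, hsinr, hcosr]; ring
  have hmem : (0 : ℝ) ∈ Set.Icc (stmt5G B y (2 * Real.pi * k - Real.pi / 2))
      (stmt5G B y (2 * Real.pi * k + Real.pi / 2)) := by
    rw [hGl, hGr]; exact ⟨by linarith, by linarith⟩
  obtain ⟨x, hxmem, hGx⟩ := intermediate_value_Icc hlr hGcont.continuousOn hmem
  obtain ⟨hxl, hxr⟩ := hxmem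
  have hxl' : 2 * Real.pi * k - Real.pi / 2 < x :=
    lt_of_le_of_ne hxl (by rintro rfl; rw [hGx] at hGl; linarith)
  have hxr' : x < 2 * Real.pi * k + Real.pi / 2 := by
    rcases lt_or_eq_of_le hxr with h | h
    · exact h
    · exfalso; rw [h, hGr] at hGx; linarith
  -- cos x > 0
  have hcosx : 0 < Real.cos x := by
    have hx' : Real.cos x = Real.cos ((x - 2 * Real.pi * k) + (k : ℤ) * (2 * Real.pi)) := by
      congr 1; push_cast; ring
    rw [Real.cos_add_int_mul_two_pi] at hx'
    rw [hx']
    exact Real.cos_pos_of_mem_Ioo ⟨by linarith, by linarith⟩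
  have hCx : C ≤ x := le_trans hlC hxl
  have hRx : 0 < stmt5R B y x := hRpos x hCx
  rw [stmt5R] at hRx
  rw [stmt5G] at hGx
  have hsc : Real.sin x ^ 2 + Real.cos x ^ 2 = 1 := Real.sin_sq_add_cos_sq x
  -- key algebraic identity
  have hT : Real.cos x * (((x + B) * Real.cos x + y * Real.sin x) * (x - B * y - B)
      + ((x + B) * Real.sin x - y * Real.cos x) * (B * x + y))
      = (x + B) * (x - B * y - B) - y * (B * x + y) := by
    linear_combination ((x + B) * (x - B * y - B) - y * (B * x + y)) * hsc
      - Real.sin x * hGx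
  -- denominator positive
  have hcd : 0 < (x - B * y - B) ^ 2 + (B * x + y) ^ 2 := by
    rcases lt_or_eq_of_le (by positivity : (0:ℝ) ≤ (x - B*y - B)^2 + (B*x + y)^2) with h | h
    · exact h
    · exfalso
      have hc2 : (x - B * y - B) ^ 2 = 0 :=
        le_antisymm (by linarith [sq_nonneg (B * x + y)]) (sq_nonneg _)
      have hd2 : (B * x + y) ^ 2 = 0 :=
        le_antisymm (by linarith [sq_nonneg (x - B * y - B)]) (sq_nonneg _)
      have h1 : x - B * y - B = 0 := by
        have := sq_eq_zero_iff.mp hc2; linarith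
      have h2 : B * x + y = 0 := by
        have := sq_eq_zero_iff.mp hd2; linarith
      rw [h1, h2] at hRx; linarith
  have hden : Real.cos x * ((x - B * y - B) ^ 2 + (B * x + y) ^ 2) ≠ 0 := by positivity
  set s : ℝ := ((x + B) * (x - B * y - B) - y * (B * x + y))
      / (Real.cos x * ((x - B * y - B) ^ 2 + (B * x + y) ^ 2)) with hsdef
  have hspos : 0 < s := by
    rw [hsdef]; exact div_pos hRx (by positivity)
  have hPc : (x + B) * Real.cos x + y * Real.sin x = s * (x - B * y - B) := by
    rw [hsdef, div_mul_eq_mul_div, eq_div_iff hden]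
    linear_combination (x - B * y - B) * hT - Real.cos x * (B * x + y) * hGx
  have hQd : (x + B) * Real.sin x - y * Real.cos x = s * (B * x + y) := by
    rw [hsdef, div_mul_eq_mul_div, eq_div_iff hden]
    linear_combination (B * x + y) * hT + Real.cos x * (x - B * y - B) * hGx
  refine ⟨x, ?_, s, hspos, ?_⟩
  · have h1 : B / (1 + B ^ 2) < 1 := by
      rw [div_lt_one (by positivity)]
      nlinarith [sq_nonneg (B - 1)]
    have : (1:ℝ) ≤ C := hC1
    linarith
  · rw [stmt5_expand (x + B) y x]
    exact stmt5_mul_I_eq _ _ _ _ _ hPc hQd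
end

section
/- For every real B ≥ 0 and every real a > 0 there exist a real t > 0 and a complex number A such that t²·(A·(1 + i·B) − B) = (conj(A) + B)·e^{i·conj(A)} and 2π·t·|A·(1 + i·B) − B| = a. -/
set_option maxHeartbeats 2000000

open Complex

lemma log_le_aux {x w : ℝ} (hx : 0 < x) (hw : 0 < w) : Real.log x ≤ Real.log w + x / w := by
  have h := Real.log_le_sub_one_of_pos (div_pos hx hw)
  have h2 : Real.log (x / w) = Real.log x - Real.log w := Real.log_div (ne_of_gt hx) (ne_of_gt hw)
  linarith

lemma abs_log_le' {z : ℂ} {M : ℝ} (h1 : 1 ≤ ‖z‖) (hM : ‖z‖ ≤ M) :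
    ‖Complex.log z‖ ≤ Real.log M + Real.pi := by
  have h : Complex.log z = (Real.log (‖z‖) : ℂ) + (Complex.arg z : ℝ) * I := by
    rw [Complex.log]
  rw [h]
  refine le_trans (norm_add_le _ _) ?_
  have h2 : ‖(Real.log (‖z‖) : ℂ)‖ = |Real.log (‖z‖)| :=
    Complex.norm_real _
  have h3 : ‖(Complex.arg z : ℝ) * I‖ = |Complex.arg z| := by
    simp [Complex.norm_real]
  rw [h2, h3]
  have h4 : |Real.log (‖z‖)| = Real.log (‖z‖) :=
    abs_of_nonneg (Real.log_nonneg h1)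
  have h5 : Real.log (‖z‖) ≤ Real.log M := Real.log_le_log (by linarith) hM
  have h6 : |Complex.arg z| ≤ Real.pi := Complex.abs_arg_le_pi z
  linarith [h4 ▸ h5]

lemma exists_P (B L : ℝ) (hB : 0 ≤ B) (hL : 0 ≤ L) :
    ∃ n : ℕ, 0 < (n:ℝ) ∧
      (1+B) * (2*Real.log ((1+B)*(2*(2*Real.pi*n)+L+B+1)) + 2*Real.pi) + B*L + B + 4*(1+B)
        ≤ 2*Real.pi*n := by
  have pi_pos := Real.pi_pos
  set w : ℝ := 32*(1+B)^2 with hw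
  have hw1 : (1:ℝ) ≤ w := by nlinarith [sq_nonneg B, sq_nonneg (1+B)]
  have hw0 : (0:ℝ) < w := by linarith
  set D : ℝ := 2*(1+B)*(Real.log (1+B) + Real.log w + (L+B+1)) + 2*Real.pi*(1+B)
      + B*L + B + 4*(1+B) with hD
  have hD0 : 0 ≤ D := by
    have h1 : 0 ≤ Real.log (1+B) := Real.log_nonneg (by linarith)
    have h2 : 0 ≤ Real.log w := Real.log_nonneg hw1
    have : 0 < 2*Real.pi*(1+B) := by positivity
    nlinarith
  obtain ⟨n, hn⟩ := exists_nat_gt (D / Real.pi + 1)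
  have hdiv : 0 ≤ D / Real.pi := div_nonneg hD0 (le_of_lt pi_pos)
  have hn1 : (1:ℝ) ≤ n := by linarith
  refine ⟨n, by linarith, ?_⟩
  set P : ℝ := 2*Real.pi*n with hPdef
  have hDP : 2*D ≤ P := by
    have h1 : D / Real.pi < n := by linarith
    have h2 : D < Real.pi * n := by
      have := (div_lt_iff₀ pi_pos).mp h1
      linarith
    have hn0 : (0:ℝ) ≤ n := by positivity
    nlinarith
  have hP0 : 0 < P := by nlinarith [pi_pos, hn1]
  -- bound the log term
  have hx0 : (0:ℝ) < 2*P+L+B+1 := by linarith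
  have hlog1 : Real.log ((1+B)*(2*P+L+B+1))
      = Real.log (1+B) + Real.log (2*P+L+B+1) :=
    Real.log_mul (by positivity) (ne_of_gt hx0)
  have hlog2 : Real.log (2*P+L+B+1) ≤ Real.log w + (2*P+L+B+1)/w := log_le_aux hx0 hw0
  -- (1+B)/w ≤ 1/32
  have hkey : (1+B) * ((2*P+L+B+1)/w) ≤ (L+B+1) + P/8 := by
    rw [div_eq_mul_inv]
    have hB1 : (1:ℝ) ≤ 1 + B := by linarith
    have h32 : 32*(1+B) ≤ w := by nlinarith
    have hinv : w⁻¹ ≤ (32*(1+B))⁻¹ := by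
      apply inv_anti₀ (by positivity) h32
    have hfrac : (1+B) * w⁻¹ ≤ (1:ℝ)/32 := by
      have : (1+B) * (32*(1+B))⁻¹ = 1/32 := by
        field_simp
      nlinarith [mul_le_mul_of_nonneg_left hinv (by linarith : (0:ℝ) ≤ 1+B)]
    have hgoal : (1+B) * ((2*P+L+B+1) * w⁻¹) = ((1+B)*w⁻¹) * (2*P+L+B+1) := by ring
    rw [hgoal]
    nlinarith [hfrac, hx0]
  calc (1+B) * (2*Real.log ((1+B)*(2*P+L+B+1)) + 2*Real.pi) + B*L + B + 4*(1+B)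
      ≤ (1+B) * (2*(Real.log (1+B) + Real.log w + (2*P+L+B+1)/w) + 2*Real.pi)
          + B*L + B + 4*(1+B) := by
        have : Real.log ((1+B)*(2*P+L+B+1))
            ≤ Real.log (1+B) + Real.log w + (2*P+L+B+1)/w := by
          rw [hlog1]; linarith
        nlinarith [this]
    _ = 2*(1+B)*(Real.log (1+B) + Real.log w) + 2*((1+B)*((2*P+L+B+1)/w))
          + 2*Real.pi*(1+B) + B*L + B + 4*(1+B) := by ring
    _ ≤ 2*(1+B)*(Real.log (1+B) + Real.log w) + 2*((L+B+1) + P/8)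
          + 2*Real.pi*(1+B) + B*L + B + 4*(1+B) := by linarith
    _ ≤ D + P/4 := by
        have h1 : (0:ℝ) ≤ L+B+1 := by linarith
        have h2 : 2*(L+B+1) ≤ 2*(1+B)*(L+B+1) := by nlinarith
        rw [hD]; nlinarith
    _ ≤ P := by linarith


lemma key (B c : ℝ) (hB : 0 ≤ B) (hc : 0 < c) :
    ∃ ζ : ℂ, Complex.exp (I * ζ) * ((ζ + (B:ℂ)) * ((1 - I * (B:ℂ)) * ζ - (B:ℂ))) = (c:ℂ) := by
  have pi_pos := Real.pi_pos
  set L : ℝ := |Real.log c| with hLdef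
  have hL : 0 ≤ L := abs_nonneg _
  obtain ⟨n, hn0, hP⟩ := exists_P B L hB hL
  set P : ℝ := 2*Real.pi*n with hPdef
  have hP0 : 0 < P := by positivity
  set M : ℝ := (1+B)*(2*P+L+B+1) with hMdef
  have hM1 : (1:ℝ) ≤ M := by nlinarith
  have hlogM : 0 ≤ Real.log M := Real.log_nonneg hM1
  set ρ : ℝ := 2*Real.log M + 2*Real.pi with hρdef
  have hρ0 : 0 ≤ ρ := by positivity
  -- main inequality: P ≥ (1+B)ρ + BL + B + 4(1+B)
  have hPineq : (1+B)*ρ + B*L + B + 4*(1+B) ≤ P := by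
    have : (1+B) * (2*Real.log M + 2*Real.pi) = (1+B)*ρ := by rw [hρdef]
    calc (1+B)*ρ + B*L + B + 4*(1+B)
        = (1+B) * (2*Real.log ((1+B)*(2*(2*Real.pi*n)+L+B+1)) + 2*Real.pi) + B*L + B + 4*(1+B) := by
          rw [hρdef, hMdef, hPdef]
      _ ≤ 2*Real.pi*n := hP
  have hρP : ρ ≤ P := by nlinarith
  set K : ℂ := (P : ℂ) - (Real.log c : ℂ) * I with hKdef
  have hKre : K.re = P := by simp [hKdef]
  have hKim : K.im = -Real.log c := by simp [hKdef]
  set S : Set ℂ := Metric.closedBall K ρ with hSdef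
  -- basic bounds on ball elements
  have hball : ∀ ζ ∈ S, P - ρ ≤ ζ.re ∧ |ζ.im| ≤ L + ρ ∧ ‖ζ‖ ≤ P + L + ρ := by
    intro ζ hζ
    rw [hSdef, Metric.mem_closedBall, Complex.dist_eq] at hζ
    have hre : |(ζ - K).re| ≤ ρ := le_trans (Complex.abs_re_le_norm _) hζ
    have him : |(ζ - K).im| ≤ ρ := le_trans (Complex.abs_im_le_norm _) hζ
    rw [Complex.sub_re, hKre] at hre
    rw [Complex.sub_im, hKim] at him
    have h1 : P - ρ ≤ ζ.re := by
      have := abs_le.mp hre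
      linarith [this.1]
    have h2 : |ζ.im| ≤ L + ρ := by
      have h3 := abs_le.mp him
      have h4 : |Real.log c| = L := rfl
      have h5 : -L ≤ Real.log c ∧ Real.log c ≤ L := abs_le.mp (le_of_eq h4)
      rw [abs_le]
      constructor <;> nlinarith [h3.1, h3.2, h5.1, h5.2]
    refine ⟨h1, h2, ?_⟩
    have h6 : ‖ζ‖ ≤ ‖K‖ + ρ := by
      calc ‖ζ‖ = ‖K + (ζ - K)‖ := by ring_nf
        _ ≤ ‖K‖ + ‖ζ - K‖ := norm_add_le _ _
        _ ≤ ‖K‖ + ρ := by linarith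
    have h7 : ‖K‖ ≤ P + L := by
      refine le_trans (Complex.norm_le_abs_re_add_abs_im K) ?_
      rw [hKre, hKim, abs_of_pos hP0, abs_neg, hLdef]
    linarith
  -- the two factors
  set u : ℂ → ℂ := fun ζ => ζ + (B:ℂ) with hudef
  set v : ℂ → ℂ := fun ζ => (1 - I*(B:ℂ)) * ζ - (B:ℂ) with hvdef
  have hure : ∀ ζ ∈ S, 4*(1+B) ≤ (u ζ).re := by
    intro ζ hζ
    obtain ⟨h1, h2, h3⟩ := hball ζ hζ
    have : (u ζ).re = ζ.re + B := by simp [hudef]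
    rw [this]
    nlinarith
  have hvre : ∀ ζ ∈ S, 4*(1+B) ≤ (v ζ).re := by
    intro ζ hζ
    obtain ⟨h1, h2, h3⟩ := hball ζ hζ
    have hv : (v ζ).re = ζ.re + B * ζ.im - B := by
      simp [hvdef, Complex.sub_re, Complex.mul_re, Complex.sub_im]
      try ring
    rw [hv]
    have h4 : -(L+ρ) ≤ ζ.im := by linarith [(abs_le.mp h2).1]
    have h5 : B * ζ.im ≥ -(B*(L+ρ)) := by nlinarith
    nlinarith
  have habsB : ‖1 - I*(B:ℂ)‖ ≤ 1 + B := by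
    calc ‖1 - I*(B:ℂ)‖ ≤ ‖(1:ℂ)‖ + ‖I*(B:ℂ)‖ := by
          exact norm_sub_le _ _
      _ = 1 + B := by simp [Complex.norm_real, _root_.abs_of_nonneg hB]
  have huabs : ∀ ζ ∈ S, ‖u ζ‖ ≤ M := by
    intro ζ hζ
    obtain ⟨h1, h2, h3⟩ := hball ζ hζ
    calc ‖u ζ‖ ≤ ‖ζ‖ + ‖(B:ℂ)‖ := norm_add_le _ _
      _ = ‖ζ‖ + B := by simp [Complex.norm_real, _root_.abs_of_nonneg hB]
      _ ≤ P + L + ρ + B := by linarith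
      _ ≤ M := by nlinarith
  have hvabs : ∀ ζ ∈ S, ‖v ζ‖ ≤ M := by
    intro ζ hζ
    obtain ⟨h1, h2, h3⟩ := hball ζ hζ
    calc ‖v ζ‖ ≤ ‖(1 - I*(B:ℂ)) * ζ‖ + ‖(B:ℂ)‖ :=
          norm_sub_le _ _
      _ = ‖1 - I*(B:ℂ)‖ * ‖ζ‖ + B := by
          simp [norm_mul, Complex.norm_real, _root_.abs_of_nonneg hB]
      _ ≤ (1+B) * (P + L + ρ) + B := by
          have := norm_nonneg ζ
          nlinarith
      _ ≤ M := by nlinarith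
  have hu1 : ∀ ζ ∈ S, 1 ≤ ‖u ζ‖ := by
    intro ζ hζ
    have := hure ζ hζ
    have h2 := Complex.re_le_norm (u ζ)
    nlinarith
  have hv1 : ∀ ζ ∈ S, 1 ≤ ‖v ζ‖ := by
    intro ζ hζ
    have := hvre ζ hζ
    have h2 := Complex.re_le_norm (v ζ)
    nlinarith
  have hu0 : ∀ ζ ∈ S, u ζ ≠ 0 := by
    intro ζ hζ h
    have := hu1 ζ hζ
    rw [h] at this; simp at this; linarith
  have hv0 : ∀ ζ ∈ S, v ζ ≠ 0 := by
    intro ζ hζ h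
    have := hv1 ζ hζ
    rw [h] at this; simp at this; linarith
  have huslit : ∀ ζ ∈ S, u ζ ∈ Complex.slitPlane := by
    intro ζ hζ
    rw [Complex.mem_slitPlane_iff]
    left; nlinarith [hure ζ hζ]
  have hvslit : ∀ ζ ∈ S, v ζ ∈ Complex.slitPlane := by
    intro ζ hζ
    rw [Complex.mem_slitPlane_iff]
    left; nlinarith [hvre ζ hζ]
  -- the contraction map
  set g : ℂ → ℂ := fun ζ => K + I * (Complex.log (u ζ) + Complex.log (v ζ)) with hgdef
  have hmap : Set.MapsTo g S S := by
    intro ζ hζ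
    rw [hSdef, Metric.mem_closedBall, Complex.dist_eq]
    have h1 : g ζ - K = I * (Complex.log (u ζ) + Complex.log (v ζ)) := by rw [hgdef]; ring
    rw [h1]
    have h2 : ‖I * (Complex.log (u ζ) + Complex.log (v ζ))‖
        = ‖Complex.log (u ζ) + Complex.log (v ζ)‖ := by
      rw [norm_mul, Complex.norm_I, one_mul]
    rw [h2]
    calc ‖Complex.log (u ζ) + Complex.log (v ζ)‖
        ≤ ‖Complex.log (u ζ)‖ + ‖Complex.log (v ζ)‖ :=
          norm_add_le _ _
      _ ≤ (Real.log M + Real.pi) + (Real.log M + Real.pi) := by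
          have := abs_log_le' (hu1 ζ hζ) (huabs ζ hζ)
          have := abs_log_le' (hv1 ζ hζ) (hvabs ζ hζ)
          linarith
      _ = ρ := by rw [hρdef]; ring
  -- derivative of g
  set g' : ℂ → ℂ := fun ζ => I * ((u ζ)⁻¹ + (1 - I*(B:ℂ)) * (v ζ)⁻¹) with hg'def
  have hderiv : ∀ ζ ∈ S, HasDerivWithinAt g (g' ζ) S ζ := by
    intro ζ hζ
    have d1 : HasDerivAt (fun z : ℂ => Complex.log (z + (B:ℂ))) ((u ζ)⁻¹) ζ := by
      have hinner : HasDerivAt (fun z : ℂ => z + (B:ℂ)) 1 ζ := (hasDerivAt_id ζ).add_const _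
      have := (Complex.hasDerivAt_log (huslit ζ hζ)).comp ζ hinner
      simpa [Function.comp_def, hudef] using this
    have d2 : HasDerivAt (fun z : ℂ => Complex.log ((1 - I*(B:ℂ)) * z - (B:ℂ)))
        ((v ζ)⁻¹ * (1 - I*(B:ℂ))) ζ := by
      have hinner : HasDerivAt (fun z : ℂ => (1 - I*(B:ℂ)) * z - (B:ℂ)) (1 - I*(B:ℂ)) ζ := by
        have := ((hasDerivAt_id ζ).const_mul (1 - I*(B:ℂ))).sub_const (B:ℂ)
        simpa using this
      have := (Complex.hasDerivAt_log (hvslit ζ hζ)).comp ζ hinner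
      simpa [Function.comp_def, hvdef] using this
    have d3 : HasDerivAt g (I * ((u ζ)⁻¹ + (v ζ)⁻¹ * (1 - I*(B:ℂ)))) ζ := by
      have := ((d1.add d2).const_mul I).const_add K
      simpa [hgdef] using this
    have d4 : HasDerivAt g (g' ζ) ζ := by
      convert d3 using 1
      rw [hg'def]; ring
    exact d4.hasDerivWithinAt
  have hbound : ∀ ζ ∈ S, ‖g' ζ‖₊ ≤ (2⁻¹ : NNReal) := by
    intro ζ hζ
    have hu4 : 4*(1+B) ≤ ‖u ζ‖ :=
      le_trans (hure ζ hζ) (Complex.re_le_norm _)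
    have hv4 : 4*(1+B) ≤ ‖v ζ‖ :=
      le_trans (hvre ζ hζ) (Complex.re_le_norm _)
    have h40 : (0:ℝ) < 4*(1+B) := by nlinarith
    have hinvu : (‖u ζ‖)⁻¹ ≤ (4*(1+B))⁻¹ := inv_anti₀ h40 hu4
    have hinvv : (‖v ζ‖)⁻¹ ≤ (4*(1+B))⁻¹ := inv_anti₀ h40 hv4
    have habs : ‖g' ζ‖ ≤ 1/2 := by
      have e1 : ‖g' ζ‖
          = ‖(u ζ)⁻¹ + (1 - I*(B:ℂ)) * (v ζ)⁻¹‖ := by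
        rw [hg'def]; simp [norm_mul]
      rw [e1]
      have e2 : ‖(u ζ)⁻¹ + (1 - I*(B:ℂ)) * (v ζ)⁻¹‖
          ≤ (‖u ζ‖)⁻¹ + (1+B) * (‖v ζ‖)⁻¹ := by
        refine le_trans (norm_add_le _ _) ?_
        rw [norm_inv, norm_mul, norm_inv]
        have h1 : (0:ℝ) ≤ (‖v ζ‖)⁻¹ := by positivity
        nlinarith [habsB]
      have e3 : (4*(1+B))⁻¹ ≤ 4⁻¹ := by
        apply inv_anti₀ (by norm_num)
        nlinarith
      have e4 : (1+B) * (‖v ζ‖)⁻¹ ≤ (1+B) * (4*(1+B))⁻¹ := by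
        apply mul_le_mul_of_nonneg_left hinvv (by linarith)
      have e5 : (1+B) * (4*(1+B))⁻¹ = 4⁻¹ := by
        field_simp
      linarith [e2, e4, e5 ▸ e4]
    rw [← NNReal.coe_le_coe, coe_nnnorm]
    norm_num
    linarith
  have hlips : LipschitzOnWith 2⁻¹ g S :=
    (convex_closedBall K ρ).lipschitzOnWith_of_nnnorm_hasDerivWithin_le hderiv hbound
  have hcontr : ContractingWith 2⁻¹ (hmap.restrict g S S) :=
    ⟨by rw [← NNReal.coe_lt_coe]; norm_num, hlips.mapsToRestrict hmap⟩
  have hKS : K ∈ S := Metric.mem_closedBall_self hρ0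
  obtain ⟨ζ, hζS, hfix, -, -⟩ :=
    ContractingWith.exists_fixedPoint' (Metric.isClosed_closedBall.isComplete) hmap hcontr hKS
      (edist_ne_top K (g K))
  -- unravel the fixed point equation
  have h : K + I * (Complex.log (u ζ) + Complex.log (v ζ)) = ζ := hfix
  have h2 : I * ζ = I * K - (Complex.log (u ζ) + Complex.log (v ζ)) := by
    linear_combination (-(Complex.I)) * h
      + (Complex.log (u ζ) + Complex.log (v ζ)) * Complex.I_sq
  have hIK : I * K = (Real.log c : ℂ) + (n:ℂ) * (2*(Real.pi:ℂ)*I) := by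
    rw [hKdef, hPdef]
    push_cast
    linear_combination (-(Real.log c : ℂ)) * Complex.I_sq
  have hIKexp : Complex.exp (I * K) = (c:ℂ) := by
    rw [hIK, Complex.exp_add]
    have e1 : Complex.exp ((Real.log c : ℂ)) = (c:ℂ) := by
      rw [← Complex.ofReal_exp, Real.exp_log hc]
    have e2 : Complex.exp ((n:ℂ) * (2*(Real.pi:ℂ)*I)) = 1 := by
      have := Complex.exp_int_mul_two_pi_mul_I (n:ℤ)
      have hcast : ((n:ℤ):ℂ) = (n:ℂ) := by push_cast; rfl
      rwa [hcast] at this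
    rw [e1, e2, mul_one]
  refine ⟨ζ, ?_⟩
  show Complex.exp (I*ζ) * (u ζ * v ζ) = (c:ℂ)
  rw [h2, Complex.exp_sub, Complex.exp_add, Complex.exp_log (hu0 ζ hζS),
    Complex.exp_log (hv0 ζ hζS), hIKexp]
  have huv0 : u ζ * v ζ ≠ 0 := mul_ne_zero (hu0 ζ hζS) (hv0 ζ hζS)
  field_simp
  rw [mul_assoc, mul_div_assoc, div_self huv0, mul_one]


/-- Assertion 6.4: for every `B ≥ 0` and every `a > 0` there exist `t > 0` and `A ∈ ℂ`
solving the period equation `t²(A(1+iB) − B) = (conj(A)+B)e^{i·conj(A)}` and realizing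
horizontal flux length `2πt|A(1+iB) − B| = a`. -/
theorem stmt6 (B : ℝ) (hB : 0 ≤ B) (a : ℝ) (ha : 0 < a) :
    ∃ (t : ℝ) (A : ℂ), 0 < t ∧
      (t : ℂ) ^ 2 * (A * (1 + Complex.I * (B : ℂ)) - (B : ℂ))
        = ((starRingEnd ℂ) A + (B : ℂ)) * Complex.exp (Complex.I * (starRingEnd ℂ) A) ∧
      2 * Real.pi * t * ‖A * (1 + Complex.I * (B : ℂ)) - (B : ℂ)‖ = a := by
  have pi_pos := Real.pi_pos
  set c : ℝ := (a / (2*Real.pi))^2 with hcdef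
  have hc : 0 < c := by positivity
  obtain ⟨ζ, hζ⟩ := key B c hB hc
  set v : ℂ := (1 - I * (B:ℂ)) * ζ - (B:ℂ) with hvdef
  have hv0 : v ≠ 0 := by
    intro h
    rw [h, mul_zero, mul_zero] at hζ
    have h2 : (c:ℂ) = 0 := hζ.symm
    have h3 : c = 0 := by exact_mod_cast h2
    exact (ne_of_gt hc) h3
  have hvabs : 0 < ‖v‖ := norm_pos_iff.mpr hv0
  set t : ℝ := a / (2*Real.pi*‖v‖) with htdef
  have ht : 0 < t := by positivity
  set A : ℂ := (starRingEnd ℂ) ζ with hAdef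
  have hA : (starRingEnd ℂ) A = ζ := Complex.conj_conj ζ
  have hw : A * (1 + Complex.I * (B:ℂ)) - (B:ℂ) = (starRingEnd ℂ) v := by
    rw [hvdef, hAdef]
    simp only [map_sub, map_mul, map_one, Complex.conj_I, Complex.conj_ofReal]
    ring
  refine ⟨t, A, ht, ?_, ?_⟩
  · -- period equation
    rw [hw, hA]
    -- (ζ+B) * exp(Iζ) * v = c
    have h4 : (ζ + (B:ℂ)) * Complex.exp (I * ζ) * v = (c:ℂ) := by
      linear_combination hζ
    have h5 : ((t:ℝ):ℂ)^2 * ((starRingEnd ℂ) v * v) = (c:ℂ) := by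
      have e1 : (starRingEnd ℂ) v * v = ((‖v‖ : ℝ)^2 : ℂ) := by
        rw [mul_comm, Complex.mul_conj, Complex.normSq_eq_norm_sq]
        push_cast; ring
      rw [e1]
      have e2 : t^2 * (‖v‖)^2 = c := by
        rw [htdef, hcdef]
        field_simp
      push_cast [← e2]
      ring
    apply mul_right_cancel₀ hv0
    rw [mul_assoc, h5, ← h4]
  · -- flux
    rw [hw]
    have : ‖(starRingEnd ℂ) v‖ = ‖v‖ := Complex.norm_conj v
    rw [this, htdef]
    field_simp
end

section
/- Let A be a complex number with Im(A) ≠ 0, let B be a complex number, and let R > |A| be a real number. Then the counterclockwise circle integral over the circle {z ∈ ℂ : |z| = R} of the function z ↦ e^{iz}·((z − A)/(z − conj(A)))·(1 + B/z) equals 2πi·[e^{i·conj(A)}·(conj(A) − A + B − A·B/conj(A)) + A·B/conj(A)]. (With the circle oriented as the boundary of the exterior domain D(∞,R), the integral equals −2πi times the bracket; this is the value of ∮_{∂_R} g·dh for the Case 2 Weierstrass data g(z) = e^{iz}(z−A)/(z−conj(A)), dh = (1 + B/z)dz.) -/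
open Complex

/-- For `Im(A) ≠ 0` and `R > |A|`, the counterclockwise circle integral over `{|z| = R}` of
`z ↦ e^{iz}·((z−A)/(z−conj(A)))·(1 + B/z)` equals
`2πi·[e^{i·conj(A)}·(conj(A) − A + B − A·B/conj(A)) + A·B/conj(A)]`. -/
theorem stmt7 (A : ℂ) (hA : A.im ≠ 0) (B : ℂ) (R : ℝ) (hR : ‖A‖ < R) :
    (∮ z in C(0, R),
        Complex.exp (Complex.I * z) * ((z - A) / (z - (starRingEnd ℂ) A)) * (1 + B / z)) =
      2 * Real.pi * Complex.I *
        (Complex.exp (Complex.I * (starRingEnd ℂ) A) *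
            ((starRingEnd ℂ) A - A + B - A * B / (starRingEnd ℂ) A)
          + A * B / (starRingEnd ℂ) A) := by
  set Ab := (starRingEnd ℂ) A with hAb
  have hAbne : Ab ≠ 0 := by
    intro h
    apply hA
    have := congrArg Complex.im h
    simpa [hAb] using this
  have hR0 : (0:ℝ) < R := lt_of_le_of_lt (norm_nonneg A) hR
  set g : ℂ → ℂ := fun z => Complex.exp (Complex.I * z) * (z - A) * (z + B) with hg
  have hgd : DifferentiableOn ℂ g (Metric.closedBall (0:ℂ) R) := by
    apply Differentiable.differentiableOn
    fun_prop
  have hAbmem : Ab ∈ Metric.ball (0:ℂ) R := by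
    simp only [Metric.mem_ball, dist_zero_right]
    rwa [hAb, Complex.norm_conj]
  have h0mem : (0:ℂ) ∈ Metric.ball (0:ℂ) R := by
    simpa using hR0
  have I1 : (∮ z in C(0, R), (z - Ab)⁻¹ • g z) = (2 * Real.pi * Complex.I : ℂ) • g Ab :=
    hgd.circleIntegral_sub_inv_smul hAbmem
  have I2 : (∮ z in C(0, R), (z - 0)⁻¹ • g z) = (2 * Real.pi * Complex.I : ℂ) • g 0 :=
    hgd.circleIntegral_sub_inv_smul h0mem
  -- pointwise identity on the circle
  have hcongr : ∀ z ∈ Metric.sphere (0:ℂ) R,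
      Complex.exp (Complex.I * z) * ((z - A) / (z - Ab)) * (1 + B / z)
        = Ab⁻¹ • ((z - Ab)⁻¹ • g z - (z - 0)⁻¹ • g z) := by
    intro z hz
    have hzabs : ‖z‖ = R := by
      simpa [Complex.dist_eq] using hz
    have hz0 : z ≠ 0 := by
      intro h; rw [h] at hzabs; simp at hzabs; linarith
    have hzAb : z - Ab ≠ 0 := by
      intro h
      have : z = Ab := by linear_combination h
      rw [this] at hzabs
      rw [hAb, Complex.norm_conj] at hzabs
      linarith
    simp only [smul_eq_mul, hg, sub_zero]
    field_simp
    ring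
  have hi1 : CircleIntegrable (fun z => (z - Ab)⁻¹ • g z) 0 R := by
    apply ContinuousOn.circleIntegrable hR0.le
    intro z hz
    have hzabs : ‖z‖ = R := by simpa [Complex.dist_eq] using hz
    have hzAb : z - Ab ≠ 0 := by
      intro h
      have : z = Ab := by linear_combination h
      rw [this, hAb, Complex.norm_conj] at hzabs; linarith
    exact ContinuousAt.continuousWithinAt (by fun_prop (disch := exact hzAb))
  have hi2 : CircleIntegrable (fun z => (z - 0)⁻¹ • g z) 0 R := by
    apply ContinuousOn.circleIntegrable hR0.le
    intro z hz
    have hzabs : ‖z‖ = R := by simpa [Complex.dist_eq] using hz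
    have hz0 : z - 0 ≠ 0 := by
      intro h; simp at h; rw [h] at hzabs; simp at hzabs; linarith
    exact ContinuousAt.continuousWithinAt (by fun_prop (disch := exact hz0))
  calc (∮ z in C(0, R),
        Complex.exp (Complex.I * z) * ((z - A) / (z - Ab)) * (1 + B / z))
      = ∮ z in C(0, R), Ab⁻¹ • ((z - Ab)⁻¹ • g z - (z - 0)⁻¹ • g z) :=
        circleIntegral.integral_congr hR0.le hcongr
    _ = Ab⁻¹ • ∮ z in C(0, R), ((z - Ab)⁻¹ • g z - (z - 0)⁻¹ • g z) :=
        circleIntegral.integral_smul _ _ _ _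
    _ = Ab⁻¹ • ((∮ z in C(0, R), (z - Ab)⁻¹ • g z) - ∮ z in C(0, R), (z - 0)⁻¹ • g z) := by
        rw [circleIntegral.integral_sub hi1 hi2]
    _ = _ := by
        rw [I1, I2]
        simp only [smul_eq_mul, hg]
        rw [mul_zero, Complex.exp_zero]
        field_simp
        ring
end

section
/- Let A be a complex number with Im(A) ≠ 0, let B be a real number, and let R > |A| be a real number. Then the counterclockwise circle integral ∮_{|z|=R} e^{−iz}·((z − conj(A))/(z − A))·(1 + B/z) dz equals the negative of the complex conjugate of the counterclockwise circle integral ∮_{|z|=R} e^{iz}·((z − A)/(z − conj(A)))·(1 + B/z) dz. Consequently, for the Weierstrass data g(z) = e^{iz}(z−A)/(z−conj(A)), dh = (1 + B/z)dz, the horizontal period condition conj(∮ g·dh) = ∮ dh/g holds if and only if both integrals ∮ g·dh and ∮ dh/g vanish. -/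
open Complex intervalIntegral


lemma conj_circleMap' (R θ : ℝ) :
    (starRingEnd ℂ) (circleMap 0 R θ) = circleMap 0 R (-θ) := by
  simp only [circleMap_zero, map_mul, ← exp_conj, map_mul, conj_ofReal, conj_I, ofReal_neg]
  ring_nf

lemma interval_conj (f : ℝ → ℂ) (a b : ℝ) :
    (∫ θ in a..b, (starRingEnd ℂ) (f θ)) = (starRingEnd ℂ) (∫ θ in a..b, f θ) := by
  simp only [intervalIntegral, ← integral_conj, map_sub]

lemma circle_conj (f : ℂ → ℂ) (R : ℝ) :
    (∮ z in C(0, R), (starRingEnd ℂ) (f ((starRingEnd ℂ) z)))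
      = -(starRingEnd ℂ) (∮ z in C(0, R), f z) := by
  rw [circleIntegral, circleIntegral, ← interval_conj]
  set h : ℝ → ℂ := fun t =>
    deriv (circleMap 0 R) (-t) • (starRingEnd ℂ) (f ((starRingEnd ℂ) (circleMap 0 R (-t)))) with hh
  have hper : Function.Periodic h (2*Real.pi) := by
    intro t
    simp only [hh, deriv_circleMap]
    rw [show -(t + 2*Real.pi) = -t - 2*Real.pi by ring,
      (periodic_circleMap 0 R).sub_eq]
  calc (∫ θ in (0:ℝ)..2*Real.pi, deriv (circleMap 0 R) θ •
          (starRingEnd ℂ) (f ((starRingEnd ℂ) (circleMap 0 R θ))))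
      = ∫ θ in (0:ℝ)..2*Real.pi, h (-θ) := by
        refine intervalIntegral.integral_congr fun θ _ => ?_
        simp only [hh, neg_neg]
    _ = ∫ θ in (-(2*Real.pi))..(-(0:ℝ)), h θ :=
        intervalIntegral.integral_comp_neg (f := h)
    _ = ∫ θ in (0:ℝ)..2*Real.pi, h θ := by
        have := hper.intervalIntegral_add_eq (-(2*Real.pi)) 0
        simpa using this
    _ = ∫ θ in (0:ℝ)..2*Real.pi,
          -(starRingEnd ℂ) (deriv (circleMap 0 R) θ • f (circleMap 0 R θ)) := by
        refine intervalIntegral.integral_congr fun θ _ => ?_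
        simp only [hh, deriv_circleMap, smul_eq_mul, map_mul, conj_I, conj_circleMap', neg_neg]
        ring
    _ = -(∫ θ in (0:ℝ)..2*Real.pi, (starRingEnd ℂ) (deriv (circleMap 0 R) θ • f (circleMap 0 R θ))) :=
        intervalIntegral.integral_neg


/-- For the Case 2 Weierstrass data `g(z) = e^{iz}(z−A)/(z−conj(A))`, `dh = (1+B/z)dz`
with `B` real, `Im(A) ≠ 0`, `R > |A|`: the circle integral `∮ dh/g` equals the negative
of the complex conjugate of `∮ g·dh`; consequently the horizontal period condition
`conj(∮ g·dh) = ∮ dh/g` holds iff both integrals vanish. -/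
theorem stmt8 (A : ℂ) (hA : A.im ≠ 0) (B : ℝ) (R : ℝ) (hR : ‖A‖ < R) :
    (∮ z in C(0, R),
        Complex.exp (-(Complex.I * z)) * ((z - (starRingEnd ℂ) A) / (z - A)) * (1 + (B : ℂ) / z))
      = -(starRingEnd ℂ) (∮ z in C(0, R),
          Complex.exp (Complex.I * z) * ((z - A) / (z - (starRingEnd ℂ) A)) * (1 + (B : ℂ) / z))
    ∧ (((starRingEnd ℂ) (∮ z in C(0, R),
          Complex.exp (Complex.I * z) * ((z - A) / (z - (starRingEnd ℂ) A)) * (1 + (B : ℂ) / z))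
        = ∮ z in C(0, R),
            Complex.exp (-(Complex.I * z)) * ((z - (starRingEnd ℂ) A) / (z - A)) *
              (1 + (B : ℂ) / z))
      ↔ ((∮ z in C(0, R),
            Complex.exp (Complex.I * z) * ((z - A) / (z - (starRingEnd ℂ) A)) * (1 + (B : ℂ) / z))
            = 0
        ∧ (∮ z in C(0, R),
            Complex.exp (-(Complex.I * z)) * ((z - (starRingEnd ℂ) A) / (z - A)) *
              (1 + (B : ℂ) / z)) = 0)) := by
  set f : ℂ → ℂ := fun z =>
    Complex.exp (Complex.I * z) * ((z - A) / (z - (starRingEnd ℂ) A)) * (1 + (B : ℂ) / z) with hf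
  have hfun : (fun z => Complex.exp (-(Complex.I * z)) * ((z - (starRingEnd ℂ) A) / (z - A)) *
      (1 + (B : ℂ) / z)) = fun z => (starRingEnd ℂ) (f ((starRingEnd ℂ) z)) := by
    funext z
    simp only [hf, map_mul, ← exp_conj, map_div₀, map_sub, map_add, map_one, conj_conj,
      conj_ofReal, conj_I]
    ring_nf
  have eq1 : (∮ z in C(0, R),
      Complex.exp (-(Complex.I * z)) * ((z - (starRingEnd ℂ) A) / (z - A)) * (1 + (B : ℂ) / z))
      = -(starRingEnd ℂ) (∮ z in C(0, R), f z) := by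
    calc (∮ z in C(0, R), Complex.exp (-(Complex.I * z)) *
            ((z - (starRingEnd ℂ) A) / (z - A)) * (1 + (B : ℂ) / z))
        = ∮ z in C(0, R), (starRingEnd ℂ) (f ((starRingEnd ℂ) z)) := by rw [hfun]
      _ = -(starRingEnd ℂ) (∮ z in C(0, R), f z) := circle_conj f R
  refine ⟨eq1, ?_⟩
  constructor
  · intro h
    rw [eq1] at h
    have h2 : (starRingEnd ℂ) (∮ z in C(0, R), f z) = 0 := by
      have := h
      rw [eq_neg_iff_add_eq_zero] at this
      simpa [two_ne_zero, ← two_mul] using this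
    have h3 : (∮ z in C(0, R), f z) = 0 := by
      simpa using congrArg (starRingEnd ℂ) h2
    exact ⟨h3, by rw [eq1, h2, neg_zero]⟩
  · rintro ⟨h1, h2⟩
    rw [h2, h1, map_zero]
end

section
/- For every real B > 0 there exist real numbers x ∈ (3π/2, 5π/2) and y > 0 such that, setting A = x + i·y, the equation e^{i·conj(A)}·(conj(A)² − |A|² + B·(conj(A) − A)) = −A·B holds; equivalently, 2·y·e^{y}·e^{ix}·(y + i·(x + B)) = B·(x + i·y). -/
open Complex

lemma sqrt_one_add_div_sq (a b : ℝ) (hb : 0 < b) :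
    Real.sqrt (1 + (a/b)^2) = Real.sqrt (b^2 + a^2) / b := by
  rw [show 1 + (a/b)^2 = (b^2+a^2)/b^2 by field_simp,
    Real.sqrt_div (by positivity), Real.sqrt_sq hb.le]

lemma polar_key (B x y : ℝ) (hB : 0 < B) (hx : 0 < x) (hy : 0 < y)
    (hθ : x + Real.arctan ((x+B)/y) - Real.arctan (y/x) = 2*Real.pi)
    (hM : 2*y*Real.exp y*Real.sqrt (y^2+(x+B)^2) = B*Real.sqrt (x^2+y^2)) :
    2 * (y:ℂ) * (Real.exp y : ℂ) * Complex.exp (Complex.I * (x:ℂ)) *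
      ((y:ℂ) + Complex.I * ((x:ℂ) + (B:ℂ))) = (B:ℂ) * ((x:ℂ) + Complex.I * (y:ℂ)) := by
  set c : ℝ := x + B with hc
  have hc0 : 0 < c := by positivity
  set r : ℝ := Real.sqrt (y^2 + c^2) with hr
  set s : ℝ := Real.sqrt (x^2 + y^2) with hs
  have hr0 : 0 < r := Real.sqrt_pos.2 (by positivity)
  have hs0 : 0 < s := Real.sqrt_pos.2 (by positivity)
  have hrC : (r:ℂ) ≠ 0 := by exact_mod_cast hr0.ne'
  have hsC : (s:ℂ) ≠ 0 := by exact_mod_cast hs0.ne'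
  set α : ℝ := Real.arctan (c/y) with hα
  set β : ℝ := Real.arctan (y/x) with hβ
  have hcosα : Real.cos α = y / r := by
    rw [hα, Real.cos_arctan, sqrt_one_add_div_sq c y hy, ← hr, one_div_div]
  have hsinα : Real.sin α = c / r := by
    rw [hα, Real.sin_arctan, sqrt_one_add_div_sq c y hy, ← hr]
    field_simp
  have hcosβ : Real.cos β = x / s := by
    rw [hβ, Real.cos_arctan, sqrt_one_add_div_sq y x hx, ← hs, one_div_div]
  have hsinβ : Real.sin β = y / s := by
    rw [hβ, Real.sin_arctan, sqrt_one_add_div_sq y x hx, ← hs]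
    field_simp
  have hA : (y:ℂ) + Complex.I * ((x:ℂ) + (B:ℂ)) = (r:ℂ) * Complex.exp ((α:ℂ) * Complex.I) := by
    rw [Complex.exp_mul_I, ← Complex.ofReal_cos, ← Complex.ofReal_sin, hcosα, hsinα]
    have : (c:ℂ) = (x:ℂ) + (B:ℂ) := by rw [hc]; push_cast; ring
    rw [← this]
    push_cast
    field_simp
  have hXY : (x:ℂ) + Complex.I * (y:ℂ) = (s:ℂ) * Complex.exp ((β:ℂ) * Complex.I) := by
    rw [Complex.exp_mul_I, ← Complex.ofReal_cos, ← Complex.ofReal_sin, hcosβ, hsinβ]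
    push_cast
    field_simp
  have hang : Complex.exp ((x:ℂ) * Complex.I) * Complex.exp ((α:ℂ) * Complex.I)
      = Complex.exp ((β:ℂ) * Complex.I) := by
    rw [← Complex.exp_add]
    have h2 : ((x:ℂ) * Complex.I + (α:ℂ) * Complex.I) = 2*(Real.pi:ℂ)*Complex.I + (β:ℂ)*Complex.I := by
      have h3 : (x:ℝ) + α = 2*Real.pi + β := by linarith
      have h4 := congrArg (fun t : ℝ => (t:ℂ)) h3
      push_cast at h4
      linear_combination Complex.I * h4
    rw [h2, Complex.exp_add, Complex.exp_two_pi_mul_I, one_mul]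
  have hMc : (2:ℂ)*(y:ℂ)*(Real.exp y:ℂ)*(r:ℂ) = (B:ℂ)*(s:ℂ) := by exact_mod_cast hM
  rw [hA, hXY, mul_comm Complex.I (x:ℂ)]
  linear_combination ((r:ℂ) * 2 * (y:ℂ) * (Real.exp y:ℂ)) * hang
    + Complex.exp ((β:ℂ)*Complex.I) * hMc

noncomputable def thf (B x y : ℝ) : ℝ :=
  x + Real.arctan ((x+B)/y) - Real.arctan (y/x)

lemma arctan_pos {t : ℝ} (h : 0 < t) : 0 < Real.arctan t := by
  have := Real.arctan_strictMono h
  rwa [Real.arctan_zero] at this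

lemma thf_lo (B y : ℝ) (hB : 0 < B) (hy : 0 < y) : thf B (3*Real.pi/2) y < 2*Real.pi := by
  have hpi := Real.pi_pos
  have h1 : Real.arctan ((3*Real.pi/2+B)/y) < Real.pi/2 := Real.arctan_lt_pi_div_two _
  have h2 : 0 < Real.arctan (y/(3*Real.pi/2)) := arctan_pos (by positivity)
  unfold thf; linarith

lemma thf_hi (B y : ℝ) (hB : 0 < B) (hy : 0 < y) : 2*Real.pi < thf B (5*Real.pi/2) y := by
  have hpi := Real.pi_pos
  have h1 : 0 < Real.arctan ((5*Real.pi/2+B)/y) := arctan_pos (by positivity)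
  have h2 : Real.arctan (y/(5*Real.pi/2)) < Real.pi/2 := Real.arctan_lt_pi_div_two _
  unfold thf; linarith

lemma thf_mono (B y : ℝ) (hB : 0 < B) (hy : 0 < y) :
    StrictMonoOn (fun x => thf B x y) (Set.Ioi (0:ℝ)) := by
  intro a ha b hb hab
  simp only [Set.mem_Ioi] at ha hb
  have h1 : Real.arctan ((a+B)/y) ≤ Real.arctan ((b+B)/y) :=
    Real.arctan_strictMono.monotone (by gcongr)
  have h2 : Real.arctan (y/b) ≤ Real.arctan (y/a) :=
    Real.arctan_strictMono.monotone (by gcongr)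
  unfold thf; dsimp only; linarith

lemma thf_contOn_x (B y : ℝ) (hy : 0 < y) :
    ContinuousOn (fun x => thf B x y) (Set.Ioi (0:ℝ)) := by
  unfold thf
  apply ContinuousOn.sub
  · apply ContinuousOn.add continuousOn_id
    exact Real.continuous_arctan.comp_continuousOn
      ((continuousOn_id.add continuousOn_const).div_const y)
  · exact Real.continuous_arctan.comp_continuousOn
      (continuousOn_const.div continuousOn_id (fun x hx => ne_of_gt hx))

lemma thf_contAt_y (B x y₀ : ℝ) (hx : x ≠ 0) (hy : 0 < y₀) :
    ContinuousAt (fun y => thf B x y) y₀ := by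
  unfold thf
  apply ContinuousAt.sub
  · apply ContinuousAt.add continuousAt_const
    exact Real.continuous_arctan.continuousAt.comp
      (ContinuousAt.div continuousAt_const continuousAt_id hy.ne')
  · exact Real.continuous_arctan.continuousAt.comp
      ((continuousAt_id).div continuousAt_const hx)

lemma exists_x (B y : ℝ) (hB : 0 < B) (hy : 0 < y) :
    ∃ x, 3*Real.pi/2 < x ∧ x < 5*Real.pi/2 ∧ thf B x y = 2*Real.pi := by
  have hpi := Real.pi_pos
  have hle : 3*Real.pi/2 ≤ 5*Real.pi/2 := by linarith
  have hsub : Set.Icc (3*Real.pi/2) (5*Real.pi/2) ⊆ Set.Ioi (0:ℝ) := by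
    intro t ht; exact lt_of_lt_of_le (by linarith) ht.1
  have := intermediate_value_Icc hle ((thf_contOn_x B y hy).mono hsub)
  have hmem : 2*Real.pi ∈ Set.Icc (thf B (3*Real.pi/2) y) (thf B (5*Real.pi/2) y) :=
    ⟨(thf_lo B y hB hy).le, (thf_hi B y hB hy).le⟩
  obtain ⟨x, hxI, hxe⟩ := this hmem
  refine ⟨x, ?_, ?_, hxe⟩
  · rcases lt_or_eq_of_le hxI.1 with h | h
    · exact h
    · exfalso; rw [← h] at hxe; exact absurd hxe (ne_of_lt (thf_lo B y hB hy))
  · rcases lt_or_eq_of_le hxI.2 with h | h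
    · exact h
    · exfalso; rw [h] at hxe; exact absurd hxe (ne_of_gt (thf_hi B y hB hy))

noncomputable def xf (B y : ℝ) : ℝ :=
  if h : 0 < B ∧ 0 < y then (exists_x B y h.1 h.2).choose else 2*Real.pi

lemma xf_spec (B y : ℝ) (hB : 0 < B) (hy : 0 < y) :
    3*Real.pi/2 < xf B y ∧ xf B y < 5*Real.pi/2 ∧ thf B (xf B y) y = 2*Real.pi := by
  rw [xf, dif_pos ⟨hB, hy⟩]
  exact (exists_x B y hB hy).choose_spec

lemma xf_pos (B y : ℝ) (hB : 0 < B) (hy : 0 < y) : 0 < xf B y := by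
  have := (xf_spec B y hB hy).1
  have hpi := Real.pi_pos
  linarith

lemma lt_xf (B y x' : ℝ) (hB : 0 < B) (hy : 0 < y) (hx' : 0 < x')
    (h : thf B x' y < 2*Real.pi) : x' < xf B y := by
  by_contra hle
  push_neg at hle
  have hspec := xf_spec B y hB hy
  have := (thf_mono B y hB hy).monotoneOn (xf_pos B y hB hy) hx' hle
  rw [hspec.2.2] at this
  linarith

lemma xf_lt (B y x' : ℝ) (hB : 0 < B) (hy : 0 < y) (hx' : 0 < x')
    (h : 2*Real.pi < thf B x' y) : xf B y < x' := by
  by_contra hle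
  push_neg at hle
  have hspec := xf_spec B y hB hy
  have := (thf_mono B y hB hy).monotoneOn hx' (xf_pos B y hB hy) hle
  rw [hspec.2.2] at this
  linarith

lemma xf_cont (B : ℝ) (hB : 0 < B) : ContinuousOn (xf B) (Set.Ioi (0:ℝ)) := by
  intro y₀ hy₀
  rw [Set.mem_Ioi] at hy₀
  apply ContinuousAt.continuousWithinAt
  rw [ContinuousAt, Metric.tendsto_nhds]
  intro ε hε
  obtain ⟨h1, h2, h3⟩ := xf_spec B y₀ hB hy₀
  set x₀ := xf B y₀ with hx₀
  set ε₁ : ℝ := min ε (min (x₀ - 3*Real.pi/2) (5*Real.pi/2 - x₀)) / 2 with hε₁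
  have hε₁0 : 0 < ε₁ := by
    apply div_pos _ two_pos
    exact lt_min hε (lt_min (by linarith) (by linarith))
  have hε₁ε : ε₁ < ε := by
    have h := min_le_left ε (min (x₀ - 3*Real.pi/2) (5*Real.pi/2 - x₀))
    rw [hε₁]; linarith
  have ha0 : 0 < x₀ - ε₁ := by
    have h := (min_le_right ε (min (x₀ - 3*Real.pi/2) (5*Real.pi/2 - x₀))).trans
      (min_le_left (x₀ - 3*Real.pi/2) (5*Real.pi/2 - x₀))
    have hpi := Real.pi_pos
    rw [hε₁]; linarith
  have hb0 : 0 < x₀ + ε₁ := by linarith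
  have hax : x₀ - ε₁ < x₀ := by linarith
  have hxb : x₀ < x₀ + ε₁ := by linarith
  have hlta : thf B (x₀ - ε₁) y₀ < 2*Real.pi := by
    have := thf_mono B y₀ hB hy₀ (Set.mem_Ioi.2 ha0) (Set.mem_Ioi.2 (by linarith : (0:ℝ) < x₀)) hax
    dsimp only at this; rw [h3] at this; linarith
  have hgtb : 2*Real.pi < thf B (x₀ + ε₁) y₀ := by
    have := thf_mono B y₀ hB hy₀ (Set.mem_Ioi.2 (by linarith : (0:ℝ) < x₀)) (Set.mem_Ioi.2 hb0) hxb
    dsimp only at this; rw [h3] at this; linarith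
  have hca : ContinuousAt (fun y => thf B (x₀ - ε₁) y) y₀ := thf_contAt_y B _ y₀ ha0.ne' hy₀
  have hcb : ContinuousAt (fun y => thf B (x₀ + ε₁) y) y₀ := thf_contAt_y B _ y₀ hb0.ne' hy₀
  have ev1 : ∀ᶠ y in nhds y₀, thf B (x₀ - ε₁) y < 2*Real.pi :=
    hca.eventually_lt continuousAt_const hlta
  have ev2 : ∀ᶠ y in nhds y₀, 2*Real.pi < thf B (x₀ + ε₁) y :=
    continuousAt_const.eventually_lt hcb hgtb
  have ev3 : ∀ᶠ y in nhds y₀, 0 < y := eventually_gt_nhds hy₀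
  filter_upwards [ev1, ev2, ev3] with y hy1 hy2 hy3
  have hlow : x₀ - ε₁ < xf B y := lt_xf B y _ hB hy3 ha0 hy1
  have hhigh : xf B y < x₀ + ε₁ := xf_lt B y _ hB hy3 hb0 hy2
  rw [Real.dist_eq, abs_lt]
  constructor <;> linarith

lemma sqrt_add_sq_le (a b : ℝ) (ha : 0 ≤ a) (hb : 0 ≤ b) :
    Real.sqrt (a^2 + b^2) ≤ a + b := by
  rw [show a + b = Real.sqrt ((a+b)^2) by rw [Real.sqrt_sq (by positivity)]]
  exact Real.sqrt_le_sqrt (by nlinarith)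

lemma le_sqrt_add_sq (a b : ℝ) (ha : 0 ≤ a) :
    a ≤ Real.sqrt (a^2 + b^2) := by
  rw [Real.le_sqrt ha (by positivity)]
  nlinarith

noncomputable def Mf (B y : ℝ) : ℝ :=
  2*y*Real.exp y*Real.sqrt (y^2+(xf B y+B)^2) - B*Real.sqrt ((xf B y)^2+y^2)

lemma Mf_cont (B : ℝ) (hB : 0 < B) : ContinuousOn (Mf B) (Set.Ioi (0:ℝ)) := by
  have hx := xf_cont B hB
  unfold Mf
  apply ContinuousOn.sub
  · apply ContinuousOn.mul
    · exact (continuousOn_const.mul continuousOn_id).mul Real.continuous_exp.continuousOn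
    · exact Real.continuous_sqrt.comp_continuousOn
        ((continuousOn_id.pow 2).add ((hx.add continuousOn_const).pow 2))
  · exact continuousOn_const.mul
      (Real.continuous_sqrt.comp_continuousOn ((hx.pow 2).add (continuousOn_id.pow 2)))

lemma xf_bounds (B y : ℝ) (hB : 0 < B) (hy : 0 < y) :
    4.5 < xf B y ∧ xf B y < 7.875 := by
  obtain ⟨h1, h2, -⟩ := xf_spec B y hB hy
  have hπ3 : (3:ℝ) < Real.pi := Real.pi_gt_three
  have hπ : Real.pi < 3.15 := Real.pi_lt_d2
  constructor <;> nlinarith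

lemma Mf_neg (B y : ℝ) (hB : 0 < B) (hy : 0 < y) (hy1 : y ≤ 1)
    (hy2 : y ≤ B/(2*(9+B))) : Mf B y < 0 := by
  set x := xf B y with hx
  obtain ⟨hx1, hx2⟩ := xf_bounds B y hB hy
  have hx0 : 0 < x := by linarith
  have e1 : Real.exp y ≤ Real.exp 1 := Real.exp_le_exp.2 hy1
  have e2 : Real.exp 1 < 2.7182818286 := Real.exp_one_lt_d9
  have s1 : Real.sqrt (y^2+(x+B)^2) ≤ y + (x+B) := sqrt_add_sq_le y (x+B) hy.le (by positivity)
  have s2 : x ≤ Real.sqrt (x^2+y^2) := le_sqrt_add_sq x y hx0.le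
  have key1 : 2*y*Real.exp y*Real.sqrt (y^2+(x+B)^2) ≤ 2*y*Real.exp 1*(y+(x+B)) := by
    gcongr <;> positivity
  have key3 : 2*y*(9+B) ≤ B := by
    rw [le_div_iff₀ (by positivity)] at hy2
    linarith
  have key2 : 2*y*Real.exp 1*(y+(x+B)) ≤ Real.exp 1 * B := by
    have h9 : y+(x+B) ≤ 9+B := by linarith
    have t1 := mul_le_mul_of_nonneg_left h9 (by positivity : (0:ℝ) ≤ 2*y*Real.exp 1)
    have t2 := mul_le_mul_of_nonneg_left key3 (Real.exp_pos 1).le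
    nlinarith [t1, t2]
  have key4 : Real.exp 1 * B < 4.5 * B := by nlinarith
  have key5 : 4.5 * B ≤ B * Real.sqrt (x^2+y^2) := by nlinarith
  unfold Mf
  rw [← hx]
  linarith

lemma Mf_pos (B : ℝ) (hB : 0 < B) : 0 < Mf B (B+3) := by
  set K : ℝ := B + 3 with hK
  have hK3 : 3 ≤ K := by linarith
  have hK0 : 0 < K := by linarith
  set x := xf B K with hx
  obtain ⟨hx1, hx2⟩ := xf_bounds B K hB hK0
  have hx0 : 0 < x := by linarith
  have s1 : K ≤ Real.sqrt (K^2+(x+B)^2) := le_sqrt_add_sq K (x+B) hK0.le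
  have s2 : Real.sqrt (x^2+K^2) ≤ x + K := sqrt_add_sq_le x K hx0.le hK0.le
  have e1 : K + 1 ≤ Real.exp K := by have := Real.add_one_le_exp K; linarith
  have key1 : 2*K*(K+1)*K ≤ 2*K*Real.exp K*Real.sqrt (K^2+(x+B)^2) := by
    gcongr <;> positivity
  have key2 : B*Real.sqrt (x^2+K^2) ≤ B*(x+K) := by nlinarith
  have key3 : B*(x+K) < 2*K*(K+1)*K := by nlinarith
  unfold Mf
  rw [← hx]
  linarith

lemma exists_root (B : ℝ) (hB : 0 < B) :
    ∃ y, 0 < y ∧ Mf B y = 0 := by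
  set δ : ℝ := min 1 (B/(2*(9+B))) with hδ
  have hδ0 : 0 < δ := lt_min one_pos (by positivity)
  set K : ℝ := B + 3 with hK
  have hδK : δ ≤ K := le_trans (min_le_left _ _) (by linarith)
  have hsub : Set.Icc δ K ⊆ Set.Ioi (0:ℝ) := fun t ht => lt_of_lt_of_le hδ0 ht.1
  have hivt := intermediate_value_Icc hδK ((Mf_cont B hB).mono hsub)
  have hneg : Mf B δ < 0 := Mf_neg B δ hB hδ0 (min_le_left _ _) (min_le_right _ _)
  have hpos : 0 < Mf B K := Mf_pos B hB
  obtain ⟨y, hyI, hy0⟩ := hivt ⟨hneg.le, hpos.le⟩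
  exact ⟨y, lt_of_lt_of_le hδ0 hyI.1, hy0⟩


/-- Assertion 6.6: for every `B > 0` there exist `x ∈ (3π/2, 5π/2)` and `y > 0` such that,
with `A = x + iy`, `e^{i·conj(A)}·(conj(A)² − |A|² + B·(conj(A) − A)) = −A·B`;
equivalently `2y·e^y·e^{ix}·(y + i(x+B)) = B·(x+iy)`. -/
theorem stmt9 (B : ℝ) (hB : 0 < B) :
    ∃ x y : ℝ, 3 * Real.pi / 2 < x ∧ x < 5 * Real.pi / 2 ∧ 0 < y ∧
      Complex.exp (Complex.I * (starRingEnd ℂ) ((x : ℂ) + (y : ℂ) * Complex.I)) *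
          ((starRingEnd ℂ) ((x : ℂ) + (y : ℂ) * Complex.I) ^ 2
            - ((‖((x : ℂ) + (y : ℂ) * Complex.I)‖ : ℝ) : ℂ) ^ 2
            + (B : ℂ) * ((starRingEnd ℂ) ((x : ℂ) + (y : ℂ) * Complex.I)
                - ((x : ℂ) + (y : ℂ) * Complex.I)))
        = -(((x : ℂ) + (y : ℂ) * Complex.I) * (B : ℂ))
      ∧ 2 * (y : ℂ) * (Real.exp y : ℂ) * Complex.exp (Complex.I * (x : ℂ)) *
          ((y : ℂ) + Complex.I * ((x : ℂ) + (B : ℂ)))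
        = (B : ℂ) * ((x : ℂ) + Complex.I * (y : ℂ)) := by
  obtain ⟨y, hy, hroot⟩ := exists_root B hB
  obtain ⟨hx1, hx2, hθ⟩ := xf_spec B y hB hy
  set x := xf B y with hx
  have hx0 : 0 < x := xf_pos B y hB hy
  have hM : 2*y*Real.exp y*Real.sqrt (y^2+(x+B)^2) = B*Real.sqrt (x^2+y^2) := by
    unfold Mf at hroot; rw [← hx] at hroot; linarith
  have hθ' : x + Real.arctan ((x+B)/y) - Real.arctan (y/x) = 2*Real.pi := hθ
  have key2 := polar_key B x y hB hx0 hy hθ' hM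
  refine ⟨x, y, hx1, hx2, hy, ?_, key2⟩
  have hconj : (starRingEnd ℂ) ((x:ℂ) + (y:ℂ)*Complex.I) = (x:ℂ) - (y:ℂ)*Complex.I := by
    rw [map_add, map_mul, Complex.conj_ofReal, Complex.conj_ofReal, Complex.conj_I]
    ring
  have habs : ((‖((x:ℂ)+(y:ℂ)*Complex.I)‖ : ℝ) : ℂ)^2 = (x:ℂ)^2 + (y:ℂ)^2 := by
    rw [← Complex.ofReal_pow, Complex.sq_norm, Complex.normSq_add_mul_I]
    push_cast; ring
  have hexp : Complex.exp (Complex.I * ((x:ℂ) - (y:ℂ)*Complex.I))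
      = (Real.exp y : ℂ) * Complex.exp (Complex.I*(x:ℂ)) := by
    have h1 : Complex.I * ((x:ℂ) - (y:ℂ)*Complex.I) = (y:ℂ) + Complex.I*(x:ℂ) := by
      linear_combination (-(y:ℂ)) * Complex.I_sq
    rw [h1, Complex.exp_add, Complex.ofReal_exp]
  rw [hconj, habs, hexp]
  linear_combination -key2
    + (y:ℂ)^2 * (Real.exp y:ℂ) * Complex.exp (Complex.I*(x:ℂ)) * Complex.I_sq
end

section
/- Let ρ > 0 and let f be complex differentiable on {z ∈ ℂ : |z| > ρ} such that w ↦ f(1/w) extends holomorphically across w = 0 with value 0 at 0. Let λ be a real number, μ a complex number, and R > max(ρ, |μ|) a real number. Then the limit as T → ∞ of ∫_R^T e^{it}·[ e^{−conj(f(t))}·(1 + λ/(t − conj(μ))) − e^{f(t)}·(1 + λ/(t − μ)) ] dt exists in ℂ. -/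
set_option maxHeartbeats 2000000


open Complex

/-- Let `f` be holomorphic on `{|z| > ρ}` and holomorphic at `∞` with `f(∞) = 0`
(i.e. `w ↦ f(1/w)` extends to a function `g` holomorphic near `0` with `g(0) = 0`).
For real `lam`, complex `μ` and `R > max(ρ, |μ|)`, the integral
`∫_R^T e^{it}[e^{−conj(f(t))}(1 + lam/(t − conj(μ))) − e^{f(t)}(1 + lam/(t − μ))] dt`
converges as `T → ∞`. -/
theorem stmt13 (ρ : ℝ) (hρ : 0 < ρ) (f : ℂ → ℂ)
    (hf : DifferentiableOn ℂ f {z : ℂ | ρ < ‖z‖})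
    (g : ℂ → ℂ) (hg : AnalyticAt ℂ g 0) (hg0 : g 0 = 0)
    (hfg : ∀ w : ℂ, w ≠ 0 → ‖w‖ < 1 / ρ → f (1 / w) = g w)
    (lam : ℝ) (μ : ℂ) (R : ℝ) (hR : max ρ ‖μ‖ < R) :
    ∃ L : ℂ, Filter.Tendsto (fun T : ℝ => ∫ t in R..T,
        Complex.exp (Complex.I * (t : ℂ)) *
          (Complex.exp (-(starRingEnd ℂ) (f (t : ℂ))) *
              (1 + (lam : ℂ) / ((t : ℂ) - (starRingEnd ℂ) μ))
            - Complex.exp (f (t : ℂ)) * (1 + (lam : ℂ) / ((t : ℂ) - μ))))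
      Filter.atTop (nhds L) := by
  have hρR : ρ < R := lt_of_le_of_lt (le_max_left _ _) hR
  have hμR : ‖μ‖ < R := lt_of_le_of_lt (le_max_right _ _) hR
  have hR0 : 0 < R := hρ.trans hρR
  -- the function F and φ
  set F : ℝ → ℂ := fun t =>
    Complex.exp (-(starRingEnd ℂ) (f (t : ℂ))) *
        (1 + (lam : ℂ) / ((t : ℂ) - (starRingEnd ℂ) μ))
      - Complex.exp (f (t : ℂ)) * (1 + (lam : ℂ) / ((t : ℂ) - μ)) with hFdef
  set φ : ℝ → ℂ := fun t => Complex.exp (Complex.I * (t : ℂ)) * F t with hφdef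
  -- g is analytic on a ball around 0
  obtain ⟨ε, εpos, hgan⟩ : ∃ ε > 0, ∀ w ∈ Metric.ball (0:ℂ) ε, AnalyticAt ℂ g w := by
    have h := hg.eventually_analyticAt
    rw [Metric.eventually_nhds_iff_ball] at h
    exact h
  have hganOn : AnalyticOnNhd ℂ g (Metric.ball 0 ε) := hgan
  -- bounds for g and deriv g on the closed ball of radius ε/2
  have hsub : Metric.closedBall (0:ℂ) (ε/2) ⊆ Metric.ball 0 ε :=
    Metric.closedBall_subset_ball (by linarith)
  obtain ⟨A, hA0, hA⟩ : ∃ A, 0 ≤ A ∧ ∀ w ∈ Metric.closedBall (0:ℂ) (ε/2), ‖g w‖ ≤ A := by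
    obtain ⟨A, hA⟩ := (isCompact_closedBall (0:ℂ) (ε/2)).exists_bound_of_continuousOn
      (hganOn.continuousOn.mono hsub)
    exact ⟨max A 0, le_max_right _ _, fun w hw => (hA w hw).trans (le_max_left _ _)⟩
  obtain ⟨B, hB0, hB⟩ : ∃ B, 0 ≤ B ∧
      ∀ w ∈ Metric.closedBall (0:ℂ) (ε/2), ‖deriv g w‖ ≤ B := by
    obtain ⟨B, hB⟩ := (isCompact_closedBall (0:ℂ) (ε/2)).exists_bound_of_continuousOn
      ((hganOn.deriv).continuousOn.mono hsub)
    exact ⟨max B 0, le_max_right _ _, fun w hw => (hB w hw).trans (le_max_left _ _)⟩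
  -- the cutoff point R₂
  set R₂ : ℝ := max (max R 2) (max (2 * ‖μ‖ + 1) (2 / ε + 1)) with hR₂def
  have hRR₂ : R ≤ R₂ := le_trans (le_max_left _ _) (le_max_left _ _)
  have hR₂2 : (2:ℝ) ≤ R₂ := le_trans (le_max_right _ _) (le_max_left _ _)
  have hR₂μ : 2 * ‖μ‖ + 1 ≤ R₂ := le_trans (le_max_left _ _) (le_max_right _ _)
  have hR₂ε : 2 / ε + 1 ≤ R₂ := le_trans (le_max_right _ _) (le_max_right _ _)
  have hR₂0 : 0 < R₂ := hR0.trans_le hRR₂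
  -- f agrees with g ∘ inv on |z| > ρ
  have hfz : ∀ z : ℂ, ρ < ‖z‖ → f z = g z⁻¹ := by
    intro z hz
    have hz0 : z ≠ 0 := by
      intro h; rw [h] at hz; simp at hz; linarith
    have h1 : (z⁻¹ : ℂ) ≠ 0 := inv_ne_zero hz0
    have h2 : ‖z⁻¹‖ < 1 / ρ := by
      rw [norm_inv, one_div]
      exact inv_strictAnti₀ hρ hz
    have := hfg z⁻¹ h1 h2
    rwa [one_div, inv_inv] at this
  -- basic facts for t ≥ R
  have habs_t : ∀ t : ℝ, R ≤ t → ‖(t:ℂ)‖ = t := by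
    intro t ht; rw [Complex.norm_real, Real.norm_eq_abs, abs_of_pos (hR0.trans_le ht)]
  have hρt : ∀ t : ℝ, R ≤ t → ρ < ‖(t:ℂ)‖ := by
    intro t ht; rw [habs_t t ht]; linarith
  have hne : ∀ t : ℝ, R ≤ t → ∀ w : ℂ, ‖w‖ = ‖μ‖ → (t:ℂ) - w ≠ 0 := by
    intro t ht w hw h
    rw [sub_eq_zero] at h
    have : ‖(t:ℂ)‖ = ‖μ‖ := by rw [h, hw]
    rw [habs_t t ht] at this
    linarith
  -- for t ≥ R₂, 1/t lies in the closed ball of radius ε/2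
  have hmem : ∀ t : ℝ, R₂ ≤ t → ((t:ℝ):ℂ)⁻¹ ∈ Metric.closedBall (0:ℂ) (ε/2) := by
    intro t ht
    have ht0 : 0 < t := hR₂0.trans_le ht
    rw [Metric.mem_closedBall, dist_zero_right, norm_inv,
      habs_t t (hRR₂.trans ht)]
    have h1 : 2/ε < t := by linarith
    have h2 : 0 < 2/ε := by positivity
    rw [inv_le_comm₀ ht0 (by positivity)]
    calc (ε/2)⁻¹ = 2/ε := by field_simp
    _ ≤ t := h1.le
  -- real-variable derivative of f
  set d : ℝ → ℂ := fun t => deriv g (((t:ℝ):ℂ)⁻¹) * -(((t:ℂ)^2)⁻¹) with hddef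
  have hfd : ∀ t : ℝ, R₂ ≤ t → HasDerivAt (fun s : ℝ => f (s:ℂ)) (d t) t := by
    intro t ht
    have ht0 : 0 < t := hR₂0.trans_le ht
    have htC : ((t:ℝ):ℂ) ≠ 0 := by
      simp only [ne_eq, Complex.ofReal_eq_zero]; exact ht0.ne'
    have hmem' : ((t:ℝ):ℂ)⁻¹ ∈ Metric.ball (0:ℂ) ε := hsub (hmem t ht)
    have h1 : HasDerivAt (fun z : ℂ => g z⁻¹) (d t) (t:ℂ) := by
      have hginv : HasDerivAt g (deriv g (((t:ℝ):ℂ)⁻¹)) (((t:ℝ):ℂ)⁻¹) :=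
        ((hgan _ hmem').differentiableAt).hasDerivAt
      have hinv : HasDerivAt (fun z : ℂ => z⁻¹) (-(((t:ℂ)^2)⁻¹)) (t:ℂ) := hasDerivAt_inv htC
      exact HasDerivAt.comp _ hginv hinv
    have h2 : f =ᶠ[nhds ((t:ℝ):ℂ)] fun z => g z⁻¹ := by
      have hopen : IsOpen {z : ℂ | ρ < ‖z‖} :=
        isOpen_lt continuous_const continuous_norm
      filter_upwards [hopen.mem_nhds (hρt t (hRR₂.trans ht))] with z hz
      exact hfz z hz
    exact (h1.congr_of_eventuallyEq h2).comp_ofReal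
  -- the derivative of F
  set F' : ℝ → ℂ := fun t =>
    ((-(starRingEnd ℂ (d t)) * Complex.exp (-(starRingEnd ℂ (f (t:ℂ)))))
        * (1 + (lam:ℂ) * (((t:ℂ) - starRingEnd ℂ μ)⁻¹))
      + Complex.exp (-(starRingEnd ℂ (f (t:ℂ)))) * ((lam:ℂ) * (-1 / ((t:ℂ) - starRingEnd ℂ μ)^2)))
    - ((Complex.exp (f (t:ℂ)) * d t) * (1 + (lam:ℂ) * (((t:ℂ) - μ)⁻¹))
      + Complex.exp (f (t:ℂ)) * ((lam:ℂ) * (-1 / ((t:ℂ) - μ)^2))) with hF'def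
  have habsμ : ‖starRingEnd ℂ μ‖ = ‖μ‖ := Complex.norm_conj μ
  have hFd : ∀ t : ℝ, R₂ ≤ t → HasDerivAt F (F' t) t := by
    intro t ht
    have htR : R ≤ t := hRR₂.trans ht
    have hre : HasDerivAt (fun s : ℝ => ((s:ℝ):ℂ)) 1 t := by
      simpa using (hasDerivAt_id t).ofReal_comp
    have hne1 : ((t:ℝ):ℂ) - starRingEnd ℂ μ ≠ 0 := hne t htR _ habsμ
    have hne2 : ((t:ℝ):ℂ) - μ ≠ 0 := hne t htR _ rfl
    have hv1 : HasDerivAt (fun s : ℝ => 1 + (lam:ℂ) * (((s:ℝ):ℂ) - starRingEnd ℂ μ)⁻¹)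
        ((lam:ℂ) * (-1 / ((t:ℂ) - starRingEnd ℂ μ)^2)) t := by
      have h0 : HasDerivAt (fun z : ℂ => 1 + (lam:ℂ) * ((z - starRingEnd ℂ μ)⁻¹))
          ((lam:ℂ) * (-1 / ((t:ℂ) - starRingEnd ℂ μ)^2)) (t:ℂ) := by
        simpa using (((((hasDerivAt_id ((t:ℝ):ℂ)).sub_const (starRingEnd ℂ μ)).inv
          hne1).const_mul (lam:ℂ)).const_add 1)
      exact h0.comp_ofReal
    have hv2 : HasDerivAt (fun s : ℝ => 1 + (lam:ℂ) * (((s:ℝ):ℂ) - μ)⁻¹)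
        ((lam:ℂ) * (-1 / ((t:ℂ) - μ)^2)) t := by
      have h0 : HasDerivAt (fun z : ℂ => 1 + (lam:ℂ) * ((z - μ)⁻¹))
          ((lam:ℂ) * (-1 / ((t:ℂ) - μ)^2)) (t:ℂ) := by
        simpa using (((((hasDerivAt_id ((t:ℝ):ℂ)).sub_const μ).inv
          hne2).const_mul (lam:ℂ)).const_add 1)
      exact h0.comp_ofReal
    have hu1 : HasDerivAt (fun s : ℝ => Complex.exp (-(starRingEnd ℂ (f ((s:ℝ):ℂ)))))
        (-(starRingEnd ℂ (d t)) * Complex.exp (-(starRingEnd ℂ (f (t:ℂ))))) t := by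
      have h1 : HasDerivAt (fun s : ℝ => -(starRingEnd ℂ (f ((s:ℝ):ℂ))))
          (-(starRingEnd ℂ (d t))) t := by
        exact ((hfd t ht).star).neg
      simpa [mul_comm] using h1.cexp
    have hu2 : HasDerivAt (fun s : ℝ => Complex.exp (f ((s:ℝ):ℂ)))
        (Complex.exp (f (t:ℂ)) * d t) t := (hfd t ht).cexp
    have hcomb := (hu1.mul hv1).sub (hu2.mul hv2)
    have hEq : F = fun s : ℝ =>
        Complex.exp (-(starRingEnd ℂ (f ((s:ℝ):ℂ)))) * (1 + (lam:ℂ) * (((s:ℝ):ℂ) - starRingEnd ℂ μ)⁻¹)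
          - Complex.exp (f ((s:ℝ):ℂ)) * (1 + (lam:ℂ) * (((s:ℝ):ℂ) - μ)⁻¹) := by
      funext s; simp [hFdef, div_eq_mul_inv]
    rw [hF'def, hEq]
    exact hcomb
  -- continuity facts
  have cof : ContinuousOn (fun t : ℝ => ((t:ℝ):ℂ)) (Set.Ici R) :=
    Complex.continuous_ofReal.continuousOn
  have cf : ContinuousOn (fun t : ℝ => f ((t:ℝ):ℂ)) (Set.Ici R) :=
    hf.continuousOn.comp cof (fun t ht => hρt t ht)
  have cF : ContinuousOn F (Set.Ici R) := by
    apply ContinuousOn.sub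
    · apply ContinuousOn.mul
      · exact Complex.continuous_exp.comp_continuousOn
          ((continuous_star.comp_continuousOn cf).neg)
      · exact continuousOn_const.add (continuousOn_const.div (cof.sub continuousOn_const)
          (fun t ht => hne t ht _ habsμ))
    · apply ContinuousOn.mul
      · exact Complex.continuous_exp.comp_continuousOn cf
      · exact continuousOn_const.add (continuousOn_const.div (cof.sub continuousOn_const)
          (fun t ht => hne t ht _ rfl))
  have cφ : ContinuousOn φ (Set.Ici R) :=
    ((Complex.continuous_exp.comp (continuous_const.mul Complex.continuous_ofReal)).continuousOn).mul cF
  have hIciRR₂ : Set.Ici R₂ ⊆ Set.Ici R := Set.Ici_subset_Ici.mpr hRR₂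
  have cof₂ : ContinuousOn (fun t : ℝ => ((t:ℝ):ℂ)) (Set.Ici R₂) := cof.mono hIciRR₂
  have hne0₂ : ∀ t : ℝ, t ∈ Set.Ici R₂ → ((t:ℝ):ℂ) ≠ 0 := by
    intro t ht
    simp only [ne_eq, Complex.ofReal_eq_zero]
    exact (hR₂0.trans_le ht).ne'
  have cd : ContinuousOn d (Set.Ici R₂) := by
    apply ContinuousOn.mul
    · exact (hganOn.deriv.continuousOn).comp (cof₂.inv₀ hne0₂)
        (fun t ht => hsub (hmem t ht))
    · exact ((cof₂.pow 2).inv₀ (fun t ht => pow_ne_zero 2 (hne0₂ t ht))).neg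
  have cF' : ContinuousOn F' (Set.Ici R₂) := by
    have c1 : ContinuousOn (fun t : ℝ => Complex.exp (-(starRingEnd ℂ (f ((t:ℝ):ℂ)))))
        (Set.Ici R₂) := Complex.continuous_exp.comp_continuousOn
      ((continuous_star.comp_continuousOn (cf.mono hIciRR₂)).neg)
    have c2 : ContinuousOn (fun t : ℝ => Complex.exp (f ((t:ℝ):ℂ))) (Set.Ici R₂) :=
      Complex.continuous_exp.comp_continuousOn (cf.mono hIciRR₂)
    have cden : ∀ w : ℂ, ‖w‖ = ‖μ‖ →
        ContinuousOn (fun t : ℝ => (((t:ℝ):ℂ) - w)⁻¹) (Set.Ici R₂) :=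
      fun w hw => (cof₂.sub continuousOn_const).inv₀
        (fun t ht => hne t (hIciRR₂ ht) w hw)
    have cden2 : ∀ w : ℂ, ‖w‖ = ‖μ‖ →
        ContinuousOn (fun t : ℝ => (-1 / (((t:ℝ):ℂ) - w)^2)) (Set.Ici R₂) :=
      fun w hw => continuousOn_const.div ((cof₂.sub continuousOn_const).pow 2)
        (fun t ht => pow_ne_zero 2 (hne t (hIciRR₂ ht) w hw))
    apply ContinuousOn.sub
    · exact ((((continuous_star.comp_continuousOn cd).neg).mul c1).mul
        (continuousOn_const.add (continuousOn_const.mul (cden _ habsμ)))).add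
        (c1.mul (continuousOn_const.mul (cden2 _ habsμ)))
    · exact (((c2.mul cd)).mul
        (continuousOn_const.add (continuousOn_const.mul (cden _ rfl)))).add
        (c2.mul (continuousOn_const.mul (cden2 _ rfl)))
  -- the norm bound on F'
  set C : ℝ := 2 * Real.exp A * (B * (1 + |lam|) + 4 * |lam|) with hCdef
  have hbnd : ∀ t : ℝ, R₂ ≤ t → ‖F' t‖ ≤ C / t^2 := by
    intro t ht
    have ht0 : 0 < t := hR₂0.trans_le ht
    have htR : R ≤ t := hRR₂.trans ht
    have hfA : ‖f ((t:ℝ):ℂ)‖ ≤ A := by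
      rw [hfz _ (hρt t htR)]
      exact hA _ (hmem t ht)
    have hexp2 : ‖Complex.exp (f ((t:ℝ):ℂ))‖ ≤ Real.exp A := by
      rw [Complex.norm_exp]
      apply Real.exp_le_exp.mpr
      exact le_trans (Complex.re_le_norm _) hfA
    have hexp1 : ‖Complex.exp (-(starRingEnd ℂ (f ((t:ℝ):ℂ))))‖ ≤ Real.exp A := by
      rw [Complex.norm_exp]
      apply Real.exp_le_exp.mpr
      rw [Complex.neg_re, Complex.conj_re]
      exact le_trans (neg_le_abs _) (le_trans (Complex.abs_re_le_norm _) hfA)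
    have hd : ‖d t‖ ≤ B / t^2 := by
      rw [hddef]
      simp only [norm_mul, norm_neg, norm_inv, norm_pow, Complex.norm_real,
        Real.norm_eq_abs, abs_of_pos ht0]
      rw [div_eq_mul_inv]
      apply mul_le_mul_of_nonneg_right (hB _ (hmem t ht))
      positivity
    have hdenom : ∀ w : ℂ, ‖w‖ = ‖μ‖ → t/2 ≤ ‖((t:ℝ):ℂ) - w‖ := by
      intro w hw
      have h1 : ‖((t:ℝ):ℂ)‖ - ‖w‖ ≤ ‖((t:ℝ):ℂ) - w‖ := norm_sub_norm_le _ _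
      rw [habs_t t htR, hw] at h1
      have : ‖μ‖ ≤ t/2 := by linarith [hR₂μ.trans ht]
      linarith
    have hvb : ∀ w : ℂ, ‖w‖ = ‖μ‖ →
        ‖(1 + (lam:ℂ) * ((((t:ℝ):ℂ) - w)⁻¹))‖ ≤ 1 + |lam| := by
      intro w hw
      calc ‖(1 + (lam:ℂ) * ((((t:ℝ):ℂ) - w)⁻¹))‖
          ≤ ‖(1:ℂ)‖ + ‖(lam:ℂ) * ((((t:ℝ):ℂ) - w)⁻¹)‖ := norm_add_le _ _
        _ = 1 + |lam| * ‖((t:ℝ):ℂ) - w‖⁻¹ := by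
            rw [norm_one, norm_mul, norm_inv, Complex.norm_real, Real.norm_eq_abs]
        _ ≤ 1 + |lam| * 1 := by
            gcongr
            rw [inv_le_one_iff₀]
            right
            have := hdenom w hw
            linarith [hR₂2.trans ht]
        _ = 1 + |lam| := by ring
    have tri : ∀ (a b c : ℂ) (a' b' c' : ℝ), ‖a‖ ≤ a' → ‖b‖ ≤ b' → ‖c‖ ≤ c' →
        ‖a * b * c‖ ≤ a' * b' * c' := by
      intro a b c a' b' c' ha hb hc
      rw [norm_mul, norm_mul]
      have ha0 : (0:ℝ) ≤ a' := (norm_nonneg a).trans ha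
      have hb0 : (0:ℝ) ≤ b' := (norm_nonneg b).trans hb
      exact mul_le_mul (mul_le_mul ha hb (norm_nonneg _) ha0) hc (norm_nonneg _)
        (mul_nonneg ha0 hb0)
    have hib : ∀ w : ℂ, ‖w‖ = ‖μ‖ →
        ‖((lam:ℂ) * (-1 / (((t:ℝ):ℂ) - w)^2))‖ ≤ |lam| * (4 / t^2) := by
      intro w hw
      have h := hdenom w hw
      have hp : 0 < ‖((t:ℝ):ℂ) - w‖ := lt_of_lt_of_le (by positivity) h
      rw [norm_mul, Complex.norm_real, Real.norm_eq_abs, norm_div, norm_neg, norm_one,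
        norm_pow]
      apply mul_le_mul_of_nonneg_left _ (abs_nonneg lam)
      rw [div_le_div_iff₀ (pow_pos hp 2) (by positivity), one_mul]
      nlinarith [h, ht0, sq_nonneg (‖((t:ℝ):ℂ) - w‖ - t/2)]
    have hstar : ‖-(starRingEnd ℂ (d t))‖ ≤ B / t^2 := by
      rw [norm_neg, RCLike.norm_conj]; exact hd
    have hX1 : ‖-(starRingEnd ℂ (d t)) * Complex.exp (-(starRingEnd ℂ (f ((t:ℝ):ℂ))))
        * (1 + (lam:ℂ) * ((((t:ℝ):ℂ) - starRingEnd ℂ μ)⁻¹))‖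
        ≤ (B / t^2) * Real.exp A * (1 + |lam|) := tri _ _ _ _ _ _ hstar hexp1 (hvb _ habsμ)
    have hX2 : ‖Complex.exp (-(starRingEnd ℂ (f ((t:ℝ):ℂ))))
        * ((lam:ℂ) * (-1 / (((t:ℝ):ℂ) - starRingEnd ℂ μ)^2))‖
        ≤ Real.exp A * (|lam| * (4 / t^2)) := by
      rw [norm_mul]
      exact mul_le_mul hexp1 (hib _ habsμ) (norm_nonneg _) (Real.exp_pos _).le
    have hY1 : ‖Complex.exp (f ((t:ℝ):ℂ)) * d t * (1 + (lam:ℂ) * ((((t:ℝ):ℂ) - μ)⁻¹))‖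
        ≤ Real.exp A * (B / t^2) * (1 + |lam|) := tri _ _ _ _ _ _ hexp2 hd (hvb _ rfl)
    have hY2 : ‖Complex.exp (f ((t:ℝ):ℂ)) * ((lam:ℂ) * (-1 / (((t:ℝ):ℂ) - μ)^2))‖
        ≤ Real.exp A * (|lam| * (4 / t^2)) := by
      rw [norm_mul]
      exact mul_le_mul hexp2 (hib _ rfl) (norm_nonneg _) (Real.exp_pos _).le
    have hSum : ‖F' t‖ ≤ ((B / t^2) * Real.exp A * (1 + |lam|) + Real.exp A * (|lam| * (4 / t^2)))
        + (Real.exp A * (B / t^2) * (1 + |lam|) + Real.exp A * (|lam| * (4 / t^2))) := by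
      rw [hF'def]
      refine le_trans (norm_sub_le _ _) (add_le_add ?_ ?_)
      · exact le_trans (norm_add_le _ _) (add_le_add hX1 hX2)
      · exact le_trans (norm_add_le _ _) (add_le_add hY1 hY2)
    have hEq : ((B / t^2) * Real.exp A * (1 + |lam|) + Real.exp A * (|lam| * (4 / t^2)))
        + (Real.exp A * (B / t^2) * (1 + |lam|) + Real.exp A * (|lam| * (4 / t^2))) = C / t^2 := by
      rw [hCdef]
      field_simp
      ring
    linarith [hSum, hEq.le, hEq.ge]
  -- ψ and its integrability on (R₂, ∞)
  set ψ : ℝ → ℂ := fun t => Complex.exp (Complex.I * (t:ℂ)) * F' t with hψdef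
  have hexpI : ∀ t : ℝ, ‖Complex.exp (Complex.I * (t:ℂ))‖ = 1 := by
    intro t
    rw [Complex.norm_exp]
    simp
  have hψcont : ContinuousOn ψ (Set.Ici R₂) :=
    ((Complex.continuous_exp.comp (continuous_const.mul Complex.continuous_ofReal)).continuousOn).mul cF'
  have hψint : MeasureTheory.IntegrableOn ψ (Set.Ioi R₂) := by
    have hmaj : MeasureTheory.IntegrableOn (fun t : ℝ => C * t ^ (-2:ℝ)) (Set.Ioi R₂) :=
      (integrableOn_Ioi_rpow_of_lt (by norm_num) hR₂0).const_mul C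
    apply MeasureTheory.Integrable.mono' hmaj
    · exact (hψcont.mono Set.Ioi_subset_Ici_self).aestronglyMeasurable measurableSet_Ioi
    · filter_upwards [MeasureTheory.ae_restrict_mem measurableSet_Ioi] with t ht
      have ht' : R₂ ≤ t := le_of_lt ht
      have ht0 : 0 < t := hR₂0.trans_le ht'
      have h1 : ‖ψ t‖ = ‖F' t‖ := by
        rw [hψdef]
        simp only [norm_mul, hexpI, one_mul]
      rw [h1]
      have h2 : C * t ^ (-2:ℝ) = C / t^2 := by
        rw [show (-2:ℝ) = ((-2:ℤ):ℝ) by norm_num, Real.rpow_intCast, div_eq_mul_inv,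
          zpow_neg]
        norm_num
      rw [h2]
      exact hbnd t ht'
  -- FTC on [R₂, T]
  have hFTC : ∀ T : ℝ, R₂ ≤ T → ∫ t in R₂..T, φ t =
      ((-(Complex.I) * (Complex.exp (Complex.I * (T:ℂ)) * F T))
        - (-(Complex.I) * (Complex.exp (Complex.I * (R₂:ℂ)) * F R₂)))
      + Complex.I * ∫ t in R₂..T, ψ t := by
    intro T hT
    have hicc : Set.uIcc R₂ T ⊆ Set.Ici R₂ := by
      rw [Set.uIcc_of_le hT]; exact Set.Icc_subset_Ici_self
    have hder : ∀ t ∈ Set.uIcc R₂ T,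
        HasDerivAt (fun s : ℝ => -(Complex.I) * (Complex.exp (Complex.I * (s:ℂ)) * F s))
          (φ t - Complex.I * ψ t) t := by
      intro t ht'
      have ht : R₂ ≤ t := hicc ht'
      have he : HasDerivAt (fun s : ℝ => Complex.exp (Complex.I * (s:ℂ)))
          (Complex.exp (Complex.I * (t:ℂ)) * Complex.I) t := by
        have h0 : HasDerivAt (fun s : ℝ => Complex.I * ((s:ℝ):ℂ)) Complex.I t := by
          simpa using ((hasDerivAt_id t).ofReal_comp.const_mul Complex.I)
        exact h0.cexp
      have hc := (he.mul (hFd t ht)).const_mul (-(Complex.I))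
      have hval : φ t - Complex.I * ψ t = -(Complex.I) *
          ((Complex.exp (Complex.I * (t:ℂ)) * Complex.I) * F t
            + Complex.exp (Complex.I * (t:ℂ)) * F' t) := by
        simp only [hφdef, hψdef]
        linear_combination (Complex.exp (Complex.I * (t:ℂ)) * F t) * Complex.I_mul_I
      rw [hval]
      exact hc
    have hψi : IntervalIntegrable ψ MeasureTheory.volume R₂ T :=
      (hψcont.mono hicc).intervalIntegrable
    have hφi : IntervalIntegrable φ MeasureTheory.volume R₂ T :=
      (cφ.mono (hicc.trans hIciRR₂)).intervalIntegrable
    have hint : IntervalIntegrable (fun t => φ t - Complex.I * ψ t) MeasureTheory.volume R₂ T :=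
      hφi.sub (hψi.const_mul _)
    have h := intervalIntegral.integral_eq_sub_of_hasDerivAt hder hint
    rw [intervalIntegral.integral_sub hφi (hψi.const_mul _),
      intervalIntegral.integral_const_mul] at h
    linear_combination h
  -- limits
  have hinvtend : Filter.Tendsto (fun T : ℝ => ((T:ℝ):ℂ)⁻¹) Filter.atTop (nhds 0) := by
    rw [tendsto_zero_iff_norm_tendsto_zero]
    apply Filter.Tendsto.congr' _ tendsto_inv_atTop_zero
    filter_upwards [Filter.eventually_gt_atTop 0] with T hT
    rw [norm_inv, Complex.norm_real, Real.norm_eq_abs, abs_of_pos hT]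
  have hftend : Filter.Tendsto (fun T : ℝ => f ((T:ℝ):ℂ)) Filter.atTop (nhds 0) := by
    have h1 : Filter.Tendsto (fun T : ℝ => g (((T:ℝ):ℂ)⁻¹)) Filter.atTop (nhds 0) := by
      have := (hg.continuousAt.tendsto).comp hinvtend
      rwa [hg0] at this
    apply Filter.Tendsto.congr' _ h1
    filter_upwards [Filter.eventually_ge_atTop R] with T hT
    exact (hfz _ (hρt T hT)).symm
  have hzero : ∀ w : ℂ, ‖w‖ = ‖μ‖ →
      Filter.Tendsto (fun T : ℝ => (lam:ℂ) / (((T:ℝ):ℂ) - w)) Filter.atTop (nhds 0) := by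
    intro w hw
    have h0 : Filter.Tendsto (fun T : ℝ => |lam| * 2 * T⁻¹) Filter.atTop (nhds 0) := by
      simpa using tendsto_inv_atTop_zero.const_mul (|lam| * 2)
    refine squeeze_zero_norm' ?_ h0
    · filter_upwards [Filter.eventually_ge_atTop R₂] with T hT
      have hT0 : 0 < T := hR₂0.trans_le hT
      have h1 : ‖((T:ℝ):ℂ)‖ - ‖w‖ ≤ ‖((T:ℝ):ℂ) - w‖ := norm_sub_norm_le _ _
      rw [habs_t T (hRR₂.trans hT), hw] at h1
      have hμ2 : ‖μ‖ ≤ T/2 := by linarith [hR₂μ.trans hT]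
      have hp : 0 < ‖((T:ℝ):ℂ) - w‖ := by
        have : T/2 ≤ ‖((T:ℝ):ℂ) - w‖ := by linarith
        linarith [hT0]
      rw [norm_div, Complex.norm_real, Real.norm_eq_abs]
      rw [div_le_iff₀ hp]
      calc |lam| ≤ |lam| * 2 * T⁻¹ * (T/2) := by
            rw [mul_assoc, mul_assoc]
            rw [show (2:ℝ) * (T⁻¹ * (T/2)) = 1 by field_simp]
            rw [mul_one]
        _ ≤ |lam| * 2 * T⁻¹ * ‖((T:ℝ):ℂ) - w‖ := by
            gcongr
            linarith
  have he1 : Filter.Tendsto (fun T : ℝ => Complex.exp (-(starRingEnd ℂ (f ((T:ℝ):ℂ)))))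
      Filter.atTop (nhds 1) := by
    have h1 : Filter.Tendsto (fun T : ℝ => -(starRingEnd ℂ (f ((T:ℝ):ℂ))))
        Filter.atTop (nhds 0) := by
      have := ((continuous_star.tendsto (0:ℂ)).comp hftend).neg
      simpa using this
    have := (Complex.continuous_exp.tendsto (0:ℂ)).comp h1
    simpa [Function.comp_def] using this
  have he2 : Filter.Tendsto (fun T : ℝ => Complex.exp (f ((T:ℝ):ℂ)))
      Filter.atTop (nhds 1) := by
    have := (Complex.continuous_exp.tendsto (0:ℂ)).comp hftend
    simpa [Function.comp_def] using this
  have hF0 : Filter.Tendsto F Filter.atTop (nhds 0) := by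
    have h := (he1.mul ((tendsto_const_nhds (x := (1:ℂ))).add (hzero _ habsμ))).sub
      (he2.mul ((tendsto_const_nhds (x := (1:ℂ))).add (hzero _ rfl)))
    rw [hFdef]
    simpa using h
  have hT1 : Filter.Tendsto
      (fun T : ℝ => -(Complex.I) * (Complex.exp (Complex.I * (T:ℂ)) * F T))
      Filter.atTop (nhds 0) := by
    rw [tendsto_zero_iff_norm_tendsto_zero]
    apply Filter.Tendsto.congr' _ (tendsto_zero_iff_norm_tendsto_zero.mp hF0)
    filter_upwards with T
    rw [norm_mul, norm_mul, norm_neg, Complex.norm_I, hexpI, one_mul, one_mul]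
  have hT2 : Filter.Tendsto (fun T : ℝ => ∫ t in R₂..T, ψ t) Filter.atTop
      (nhds (∫ t in Set.Ioi R₂, ψ t)) :=
    MeasureTheory.intervalIntegral_tendsto_integral_Ioi R₂ hψint Filter.tendsto_id
  -- assemble
  refine ⟨(∫ t in R..R₂, φ t) +
    ((0 - (-(Complex.I) * (Complex.exp (Complex.I * (R₂:ℂ)) * F R₂)))
      + Complex.I * ∫ t in Set.Ioi R₂, ψ t), ?_⟩
  have hmain : Filter.Tendsto (fun T : ℝ => ∫ t in R..T, φ t) Filter.atTop
      (nhds ((∫ t in R..R₂, φ t) +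
        ((0 - (-(Complex.I) * (Complex.exp (Complex.I * (R₂:ℂ)) * F R₂)))
          + Complex.I * ∫ t in Set.Ioi R₂, ψ t))) := by
    have hlim : Filter.Tendsto (fun T : ℝ => (∫ t in R..R₂, φ t) +
        (((-(Complex.I) * (Complex.exp (Complex.I * (T:ℂ)) * F T))
          - (-(Complex.I) * (Complex.exp (Complex.I * (R₂:ℂ)) * F R₂)))
          + Complex.I * ∫ t in R₂..T, ψ t)) Filter.atTop
        (nhds ((∫ t in R..R₂, φ t) +
          ((0 - (-(Complex.I) * (Complex.exp (Complex.I * (R₂:ℂ)) * F R₂)))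
            + Complex.I * ∫ t in Set.Ioi R₂, ψ t))) :=
      tendsto_const_nhds.add ((hT1.sub tendsto_const_nhds).add (hT2.const_mul _))
    apply Filter.Tendsto.congr' _ hlim
    filter_upwards [Filter.eventually_ge_atTop R₂] with T hT
    have hφ1 : IntervalIntegrable φ MeasureTheory.volume R R₂ := by
      apply ContinuousOn.intervalIntegrable
      apply cφ.mono
      rw [Set.uIcc_of_le hRR₂]
      exact Set.Icc_subset_Ici_self
    have hφ2 : IntervalIntegrable φ MeasureTheory.volume R₂ T := by
      apply ContinuousOn.intervalIntegrable
      apply cφ.mono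
      rw [Set.uIcc_of_le hT]
      exact fun x hx => hRR₂.trans hx.1
    rw [← intervalIntegral.integral_add_adjacent_intervals hφ1 hφ2, hFTC T hT]
  exact hmain
end

section
/- Let C₁ ∈ ℂ, D > 0, T₀ > 0, λ ∈ ℝ and μ ∈ ℂ with |μ| < T₀. Let f be a complex-valued function on [T₀, ∞) such that |f(t) − C₁/t| ≤ D/t² for all t ≥ T₀. Then there exist T₁ ≥ T₀ and D' > 0 such that for all real t ≥ T₁: | e^{−conj(f(t))}·(1 + λ/(t − conj(μ))) − e^{f(t)}·(1 + λ/(t − μ)) + 2·Re(C₁)/t | ≤ D'/t². -/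
open Complex

private lemma abs_add6 (x1 x2 x3 x4 x5 x6 : ℂ) :
    ‖x1 + x2 + x3 + x4 + x5 + x6‖ ≤
      ‖x1‖ + ‖x2‖ + ‖x3‖ + ‖x4‖ + ‖x5‖ +
        ‖x6‖ := by
  calc ‖x1 + x2 + x3 + x4 + x5 + x6‖
      ≤ ‖x1 + x2 + x3 + x4 + x5‖ + ‖x6‖ := norm_add_le _ _
    _ ≤ (‖x1 + x2 + x3 + x4‖ + ‖x5‖) + ‖x6‖ := by
        gcongr; exact norm_add_le _ _
    _ ≤ ((‖x1 + x2 + x3‖ + ‖x4‖) + ‖x5‖) + ‖x6‖ := by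
        gcongr; exact norm_add_le _ _
    _ ≤ (((‖x1 + x2‖ + ‖x3‖) + ‖x4‖) + ‖x5‖) +
          ‖x6‖ := by gcongr; exact norm_add_le _ _
    _ ≤ ((((‖x1‖ + ‖x2‖) + ‖x3‖) + ‖x4‖) +
          ‖x5‖) + ‖x6‖ := by gcongr; exact norm_add_le _ _

/-- Expansion (7.9): if `|f(t) − C₁/t| ≤ D/t²` for `t ≥ T₀`, then there are `T₁ ≥ T₀` and
`D' > 0` such that for all `t ≥ T₁`,
`|e^{−conj(f(t))}(1 + λ/(t − conj(μ))) − e^{f(t)}(1 + λ/(t − μ)) + 2Re(C₁)/t| ≤ D'/t²`. -/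
theorem stmt14 (C₁ : ℂ) (D T₀ : ℝ) (hD : 0 < D) (hT₀ : 0 < T₀) (lam : ℝ) (μ : ℂ)
    (hμ : ‖μ‖ < T₀) (f : ℝ → ℂ)
    (hf : ∀ t : ℝ, T₀ ≤ t → ‖f t - C₁ / (t : ℂ)‖ ≤ D / t ^ 2) :
    ∃ T₁ D' : ℝ, T₀ ≤ T₁ ∧ 0 < D' ∧ ∀ t : ℝ, T₁ ≤ t →
      ‖(Complex.exp (-(starRingEnd ℂ) (f t)) *
              (1 + (lam : ℂ) / ((t : ℂ) - (starRingEnd ℂ) μ))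
            - Complex.exp (f t) * (1 + (lam : ℂ) / ((t : ℂ) - μ))
            + 2 * ((C₁.re : ℝ) : ℂ) / (t : ℂ))‖ ≤ D' / t ^ 2 := by
  set K : ℝ := ‖C₁‖ + D / T₀ with hKdef
  have hK : 0 < K := by positivity
  refine ⟨max (max T₀ (K + 1)) (2 * ‖μ‖ + 1),
    2 * K ^ 2 + 2 * D + 8 * |lam| * K + 8 * |lam| * ‖μ‖ + 1,
    le_trans (le_max_left _ _) (le_max_left _ _), by positivity, ?_⟩
  intro t ht
  have ht0 : T₀ ≤ t := le_trans (le_trans (le_max_left _ _) (le_max_left _ _)) ht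
  have htK : K + 1 ≤ t := le_trans (le_trans (le_max_right _ _) (le_max_left _ _)) ht
  have htμ : 2 * ‖μ‖ + 1 ≤ t := le_trans (le_max_right _ _) ht
  have htp : (0 : ℝ) < t := lt_of_lt_of_le hT₀ ht0
  have ht2 : (0 : ℝ) < t ^ 2 := by positivity
  set w : ℂ := f t with hw_def
  -- |w| ≤ K / t ≤ 1
  have habsC : ‖C₁ / (t : ℂ)‖ = ‖C₁‖ / t := by
    rw [norm_div, Complex.norm_real, Real.norm_eq_abs, abs_of_pos htp]
  have hw : ‖w‖ ≤ K / t := by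
    have h1 : ‖w‖ ≤ D / t ^ 2 + ‖C₁‖ / t := by
      calc ‖w‖ = ‖(w - C₁ / (t : ℂ)) + C₁ / (t : ℂ)‖ := by ring_nf
        _ ≤ ‖w - C₁ / (t : ℂ)‖ + ‖C₁ / (t : ℂ)‖ :=
            norm_add_le _ _
        _ ≤ D / t ^ 2 + ‖C₁‖ / t := by rw [habsC]; exact add_le_add_left (hf t ht0) _
    have h2 : D / t ^ 2 ≤ (D / T₀) / t := by
      rw [div_div, pow_two]
      gcongr
    have h3 : (D / T₀) / t + ‖C₁‖ / t = K / t := by rw [hKdef, add_div]; ring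
    linarith
  have hw1 : ‖w‖ ≤ 1 := by
    refine hw.trans ?_
    rw [div_le_one htp]; linarith
  have hKt : K / t ≤ 1 := by rw [div_le_one htp]; linarith
  -- denominators
  have hdenμ : t / 2 ≤ ‖(t : ℂ) - μ‖ := by
    have h := norm_sub_norm_le (t : ℂ) μ
    simp only [Complex.norm_real, Real.norm_eq_abs, abs_of_pos htp] at h
    linarith
  have hdenμ' : t / 2 ≤ ‖(t : ℂ) - (starRingEnd ℂ) μ‖ := by
    have h := norm_sub_norm_le (t : ℂ) ((starRingEnd ℂ) μ)
    simp only [Complex.norm_real, Real.norm_eq_abs, abs_of_pos htp, Complex.norm_conj] at h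
    linarith
  have htμpos : (0 : ℝ) < t / 2 := by linarith
  set a : ℂ := (lam : ℂ) / ((t : ℂ) - μ) with ha_def
  set b : ℂ := (lam : ℂ) / ((t : ℂ) - (starRingEnd ℂ) μ) with hb_def
  have hμne : ((t : ℂ) - μ) ≠ 0 := by
    intro h
    rw [h] at hdenμ
    simp at hdenμ
    linarith
  have hμ'ne : ((t : ℂ) - (starRingEnd ℂ) μ) ≠ 0 := by
    intro h
    rw [h] at hdenμ'
    simp at hdenμ'
    linarith
  have ha : ‖a‖ ≤ 2 * |lam| / t := by
    rw [ha_def, norm_div, Complex.norm_real, Real.norm_eq_abs]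
    have : 2 * |lam| / t = |lam| / (t / 2) := by field_simp
    rw [this]
    gcongr
  have hb : ‖b‖ ≤ 2 * |lam| / t := by
    rw [hb_def, norm_div, Complex.norm_real, Real.norm_eq_abs]
    have : 2 * |lam| / t = |lam| / (t / 2) := by field_simp
    rw [this]
    gcongr
  -- exponential estimates
  have hconjw : ‖-(starRingEnd ℂ) w‖ = ‖w‖ := by
    rw [norm_neg, Complex.norm_conj]
  have he1 : ‖Complex.exp (-(starRingEnd ℂ) w) - 1 - (-(starRingEnd ℂ) w)‖
      ≤ (K / t) ^ 2 := by
    have := Complex.norm_exp_sub_one_sub_id_le (x := -(starRingEnd ℂ) w) (by rw [hconjw]; exact hw1)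
    rw [hconjw] at this
    exact this.trans (by gcongr)
  have he2 : ‖Complex.exp w - 1 - w‖ ≤ (K / t) ^ 2 := by
    have := Complex.norm_exp_sub_one_sub_id_le hw1
    exact this.trans (by gcongr)
  have he3 : ‖Complex.exp (-(starRingEnd ℂ) w) - 1‖ ≤ 2 * (K / t) := by
    have := Complex.norm_exp_sub_one_le (x := -(starRingEnd ℂ) w) (by rw [hconjw]; exact hw1)
    rw [hconjw] at this
    exact this.trans (by gcongr)
  have he4 : ‖Complex.exp w - 1‖ ≤ 2 * (K / t) := by
    exact (Complex.norm_exp_sub_one_le hw1).trans (by gcongr)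
  -- key algebraic identity
  have hc : 2 * ((C₁.re : ℝ) : ℂ) / (t : ℂ) = C₁ / (t : ℂ) + (starRingEnd ℂ) (C₁ / (t : ℂ)) := by
    rw [map_div₀, Complex.conj_ofReal, ← add_div, Complex.add_conj]
    push_cast
    ring
  have hconjsub : (starRingEnd ℂ) (C₁ / (t : ℂ) - w)
      = (starRingEnd ℂ) (C₁ / (t : ℂ)) - (starRingEnd ℂ) w := map_sub _ _ _
  have key : Complex.exp (-(starRingEnd ℂ) w) * (1 + b) - Complex.exp w * (1 + a)
      + 2 * ((C₁.re : ℝ) : ℂ) / (t : ℂ)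
      = (Complex.exp (-(starRingEnd ℂ) w) - 1 - (-(starRingEnd ℂ) w))
        + (-(Complex.exp w - 1 - w))
        + ((C₁ / (t : ℂ) - w) + (starRingEnd ℂ) (C₁ / (t : ℂ) - w))
        + b * (Complex.exp (-(starRingEnd ℂ) w) - 1)
        + (-(a * (Complex.exp w - 1)))
        + (b - a) := by
    rw [hc, hconjsub]; ring
  rw [key]
  -- bound each of the six terms
  have h3' : ‖(C₁ / (t : ℂ) - w) + (starRingEnd ℂ) (C₁ / (t : ℂ) - w)‖
      ≤ 2 * D / t ^ 2 := by
    have h := hf t ht0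
    have hsym : ‖C₁ / (t : ℂ) - w‖ = ‖w - C₁ / (t : ℂ)‖ := by
      rw [← neg_sub, norm_neg]
    calc ‖(C₁ / (t : ℂ) - w) + (starRingEnd ℂ) (C₁ / (t : ℂ) - w)‖
        ≤ ‖C₁ / (t : ℂ) - w‖ + ‖(starRingEnd ℂ) (C₁ / (t : ℂ) - w)‖ :=
          norm_add_le _ _
      _ = 2 * ‖w - C₁ / (t : ℂ)‖ := by rw [Complex.norm_conj, hsym]; ring
      _ ≤ 2 * (D / t ^ 2) := by linarith
      _ = 2 * D / t ^ 2 := by ring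
  have h4' : ‖b * (Complex.exp (-(starRingEnd ℂ) w) - 1)‖
      ≤ 4 * |lam| * K / t ^ 2 := by
    rw [norm_mul]
    calc ‖b‖ * ‖Complex.exp (-(starRingEnd ℂ) w) - 1‖
        ≤ (2 * |lam| / t) * (2 * (K / t)) := by
          apply mul_le_mul hb he3 (norm_nonneg _) (by positivity)
      _ = 4 * |lam| * K / t ^ 2 := by field_simp; ring
  have h5' : ‖-(a * (Complex.exp w - 1))‖ ≤ 4 * |lam| * K / t ^ 2 := by
    rw [norm_neg, norm_mul]
    calc ‖a‖ * ‖Complex.exp w - 1‖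
        ≤ (2 * |lam| / t) * (2 * (K / t)) := by
          apply mul_le_mul ha he4 (norm_nonneg _) (by positivity)
      _ = 4 * |lam| * K / t ^ 2 := by field_simp; ring
  have h6' : ‖b - a‖ ≤ 8 * |lam| * ‖μ‖ / t ^ 2 := by
    have hident : b - a = (lam : ℂ) * ((starRingEnd ℂ) μ - μ) /
        (((t : ℂ) - (starRingEnd ℂ) μ) * ((t : ℂ) - μ)) := by
      rw [hb_def, ha_def]
      field_simp
      ring
    rw [hident, norm_div, norm_mul, norm_mul, Complex.norm_real, Real.norm_eq_abs]
    have hnum : ‖(starRingEnd ℂ) μ - μ‖ ≤ 2 * ‖μ‖ := by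
      have := norm_sub_le ((starRingEnd ℂ) μ) μ
      simp only [Complex.norm_conj] at this
      linarith
    calc |lam| * ‖(starRingEnd ℂ) μ - μ‖ /
          (‖(t : ℂ) - (starRingEnd ℂ) μ‖ * ‖(t : ℂ) - μ‖)
        ≤ |lam| * (2 * ‖μ‖) / ((t / 2) * (t / 2)) := by
          gcongr
      _ = 8 * |lam| * ‖μ‖ / t ^ 2 := by field_simp; ring
  have he2' : ‖-(Complex.exp w - 1 - w)‖ ≤ (K / t) ^ 2 := by
    rw [norm_neg]; exact he2
  calc ‖_‖ ≤ _ := abs_add6 _ _ _ _ _ _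
    _ ≤ (K / t) ^ 2 + (K / t) ^ 2 + 2 * D / t ^ 2 + 4 * |lam| * K / t ^ 2
        + 4 * |lam| * K / t ^ 2 + 8 * |lam| * ‖μ‖ / t ^ 2 :=
      add_le_add (add_le_add (add_le_add (add_le_add (add_le_add he1 he2') h3') h4') h5') h6'
    _ ≤ (2 * K ^ 2 + 2 * D + 8 * |lam| * K + 8 * |lam| * ‖μ‖ + 1) / t ^ 2 := by
      rw [div_pow, ← add_div, ← add_div, ← add_div, ← add_div,
        ← add_div]
      gcongr ?_ / (t ^ 2)
      linarith
end

section
/- Let R' ≥ 1 and C > 0 be real numbers, and let f be a continuous complex-valued function on {z ∈ ℂ : |z| ≥ R'} with |f(z)| ≤ C/|z| there. For r > R', let Λ_r denote the polygonal path consisting of the three consecutive segments from −r to −r + i·r, from −r + i·r to r + i·r, and from r + i·r to r. Then the path integrals of z ↦ e^{iz + f(z)} over Λ_r along the sequence r = 2πn tend to 0 as n → ∞; explicitly, i·∫₀^{2πn} e^{i(−2πn+iv) + f(−2πn+iv)} dv + ∫_{−2πn}^{2πn} e^{i(u+i·2πn) + f(u+i·2πn)} du − i·∫₀^{2πn} e^{i(2πn+iv)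 + f(2πn+iv)} dv → 0 as n → ∞. -/
open Complex

/-- Let `f` be continuous on `{|z| ≥ R'}` (`R' ≥ 1`) with `|f(z)| ≤ C/|z|` there. Then the
path integrals of `z ↦ e^{iz + f(z)}` over the polygonal paths `Λ_r` (from `−r` up to
`−r + ir`, across to `r + ir`, and down to `r`) along the sequence `r = 2πn` tend to `0`
as `n → ∞`. -/
theorem stmt15 (R' C : ℝ) (hR' : 1 ≤ R') (hC : 0 < C) (f : ℂ → ℂ)
    (hcont : ContinuousOn f {z : ℂ | R' ≤ ‖z‖})
    (hf : ∀ z : ℂ, R' ≤ ‖z‖ → ‖f z‖ ≤ C / ‖z‖) :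
    Filter.Tendsto (fun n : ℕ =>
      Complex.I * (∫ v in (0 : ℝ)..(2 * Real.pi * n),
          Complex.exp (Complex.I * (-((2 * Real.pi * n : ℝ) : ℂ) + Complex.I * (v : ℂ))
            + f (-((2 * Real.pi * n : ℝ) : ℂ) + Complex.I * (v : ℂ))))
      + (∫ u in (-(2 * Real.pi * n) : ℝ)..(2 * Real.pi * n),
          Complex.exp (Complex.I * ((u : ℂ) + Complex.I * ((2 * Real.pi * n : ℝ) : ℂ))
            + f ((u : ℂ) + Complex.I * ((2 * Real.pi * n : ℝ) : ℂ))))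
      - Complex.I * (∫ v in (0 : ℝ)..(2 * Real.pi * n),
          Complex.exp (Complex.I * (((2 * Real.pi * n : ℝ) : ℂ) + Complex.I * (v : ℂ))
            + f (((2 * Real.pi * n : ℝ) : ℂ) + Complex.I * (v : ℂ)))))
      Filter.atTop (nhds 0) := by
  have hπ : (0:ℝ) < Real.pi := Real.pi_pos
  have hr_top : Filter.Tendsto (fun n : ℕ => 2 * Real.pi * n) Filter.atTop Filter.atTop := by
    apply Filter.Tendsto.const_mul_atTop (by positivity)
    exact tendsto_natCast_atTop_atTop
  apply squeeze_zero_norm'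
    (a := fun n : ℕ => 4 * C / (2 * Real.pi * n)
      + Real.exp (C - 2 * Real.pi * n) * (2 * (2 * Real.pi * n)))
  · -- the eventual bound
    filter_upwards [hr_top.eventually_ge_atTop (max R' C)] with n hn
    set r : ℝ := 2 * Real.pi * n with hrdef
    have hrR : R' ≤ r := le_trans (le_max_left _ _) hn
    have hrC : C ≤ r := le_trans (le_max_right _ _) hn
    have hr1 : (1:ℝ) ≤ r := le_trans hR' hrR
    have hr0 : (0:ℝ) < r := lt_of_lt_of_le one_pos hr1
    -- exp(± I r) = 1
    have hexpIr : Complex.exp (Complex.I * (r : ℂ)) = 1 := by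
      have h := Complex.exp_int_mul_two_pi_mul_I (n : ℤ)
      rw [show ((n:ℤ):ℂ) * (2 * (Real.pi:ℂ) * Complex.I) = Complex.I * (r:ℂ) by
        rw [hrdef]; push_cast; ring] at h
      exact h
    have hexpIr' : Complex.exp (-(Complex.I * (r : ℂ))) = 1 := by
      rw [Complex.exp_neg, hexpIr, inv_one]
    -- basic bound on f on the relevant region
    have hfr : ∀ z : ℂ, r ≤ ‖z‖ → ‖f z‖ ≤ C / r := by
      intro z hz
      refine le_trans (hf z (le_trans hrR hz)) ?_
      exact div_le_div_of_nonneg_left hC.le hr0 hz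
    have hCr1 : C / r ≤ 1 := by
      rw [div_le_one hr0]; exact hrC
    -- abs of the points on the vertical segments
    have habs_left : ∀ v : ℝ, r ≤ ‖-(r:ℂ) + Complex.I * (v:ℂ)‖ := by
      intro v
      have : (-(r:ℂ) + Complex.I * (v:ℂ)).re = -r := by simp
      calc r = |(-(r:ℂ) + Complex.I * (v:ℂ)).re| := by rw [this, abs_neg, abs_of_pos hr0]
        _ ≤ _ := Complex.abs_re_le_norm _
    have habs_right : ∀ v : ℝ, r ≤ ‖(r:ℂ) + Complex.I * (v:ℂ)‖ := by
      intro v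
      have : ((r:ℂ) + Complex.I * (v:ℂ)).re = r := by simp
      calc r = |((r:ℂ) + Complex.I * (v:ℂ)).re| := by rw [this, abs_of_pos hr0]
        _ ≤ _ := Complex.abs_re_le_norm _
    have habs_top : ∀ u : ℝ, r ≤ ‖(u:ℂ) + Complex.I * (r:ℂ)‖ := by
      intro u
      have : ((u:ℂ) + Complex.I * (r:ℂ)).im = r := by simp
      calc r = |((u:ℂ) + Complex.I * (r:ℂ)).im| := by rw [this, abs_of_pos hr0]
        _ ≤ _ := Complex.abs_im_le_norm _
    -- factorizations of the vertical integrands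
    have hfac_left : ∀ v : ℝ,
        Complex.exp (Complex.I * (-(r:ℂ) + Complex.I * (v:ℂ)) + f (-(r:ℂ) + Complex.I * (v:ℂ)))
        = Complex.exp (-(v:ℂ)) * Complex.exp (f (-(r:ℂ) + Complex.I * (v:ℂ))) := by
      intro v
      rw [← Complex.exp_add]
      rw [show Complex.I * (-(r:ℂ) + Complex.I * (v:ℂ)) + f (-(r:ℂ) + Complex.I * (v:ℂ))
          = -(Complex.I * (r:ℂ)) + (-(v:ℂ) + f (-(r:ℂ) + Complex.I * (v:ℂ))) by
        linear_combination (v:ℂ) * Complex.I_sq]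
      rw [Complex.exp_add, hexpIr', one_mul, Complex.exp_add]
    have hfac_right : ∀ v : ℝ,
        Complex.exp (Complex.I * ((r:ℂ) + Complex.I * (v:ℂ)) + f ((r:ℂ) + Complex.I * (v:ℂ)))
        = Complex.exp (-(v:ℂ)) * Complex.exp (f ((r:ℂ) + Complex.I * (v:ℂ))) := by
      intro v
      rw [← Complex.exp_add]
      rw [show Complex.I * ((r:ℂ) + Complex.I * (v:ℂ)) + f ((r:ℂ) + Complex.I * (v:ℂ))
          = Complex.I * (r:ℂ) + (-(v:ℂ) + f ((r:ℂ) + Complex.I * (v:ℂ))) by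
        linear_combination (v:ℂ) * Complex.I_sq]
      rw [Complex.exp_add, hexpIr, one_mul, Complex.exp_add]
    -- integrability of the vertical integrands
    have hmaps_left : Set.MapsTo (fun v : ℝ => -(r:ℂ) + Complex.I * (v:ℂ))
        (Set.uIcc 0 r) {z : ℂ | R' ≤ ‖z‖} := by
      intro v _; exact le_trans hrR (habs_left v)
    have hmaps_right : Set.MapsTo (fun v : ℝ => (r:ℂ) + Complex.I * (v:ℂ))
        (Set.uIcc 0 r) {z : ℂ | R' ≤ ‖z‖} := by
      intro v _; exact le_trans hrR (habs_right v)
    have hpath_left : Continuous fun v : ℝ => -(r:ℂ) + Complex.I * (v:ℂ) :=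
      continuous_const.add (continuous_const.mul Complex.continuous_ofReal)
    have hpath_right : Continuous fun v : ℝ => (r:ℂ) + Complex.I * (v:ℂ) :=
      continuous_const.add (continuous_const.mul Complex.continuous_ofReal)
    have hint_left : IntervalIntegrable (fun v : ℝ =>
        Complex.exp (Complex.I * (-(r:ℂ) + Complex.I * (v:ℂ)) + f (-(r:ℂ) + Complex.I * (v:ℂ))))
        MeasureTheory.volume 0 r := by
      apply ContinuousOn.intervalIntegrable
      apply Complex.continuous_exp.comp_continuousOn
      exact ((continuous_const.mul hpath_left).continuousOn.add
        (hcont.comp hpath_left.continuousOn hmaps_left))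
    have hint_right : IntervalIntegrable (fun v : ℝ =>
        Complex.exp (Complex.I * ((r:ℂ) + Complex.I * (v:ℂ)) + f ((r:ℂ) + Complex.I * (v:ℂ))))
        MeasureTheory.volume 0 r := by
      apply ContinuousOn.intervalIntegrable
      apply Complex.continuous_exp.comp_continuousOn
      exact ((continuous_const.mul hpath_right).continuousOn.add
        (hcont.comp hpath_right.continuousOn hmaps_right))
    -- the vertical difference bound
    have hvert : ‖(∫ v in (0:ℝ)..r,
          Complex.exp (Complex.I * (-(r:ℂ) + Complex.I * (v:ℂ)) + f (-(r:ℂ) + Complex.I * (v:ℂ))))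
        - (∫ v in (0:ℝ)..r,
          Complex.exp (Complex.I * ((r:ℂ) + Complex.I * (v:ℂ)) + f ((r:ℂ) + Complex.I * (v:ℂ))))‖
        ≤ 4 * C / r := by
      rw [← intervalIntegral.integral_sub hint_left hint_right]
      have hb : ∀ v : ℝ,
          ‖Complex.exp (Complex.I * (-(r:ℂ) + Complex.I * (v:ℂ)) + f (-(r:ℂ) + Complex.I * (v:ℂ)))
            - Complex.exp (Complex.I * ((r:ℂ) + Complex.I * (v:ℂ)) + f ((r:ℂ) + Complex.I * (v:ℂ)))‖
          ≤ (4 * C / r) * Real.exp (-v) := by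
        intro v
        rw [hfac_left v, hfac_right v, ← mul_sub]
        rw [show ‖Complex.exp (-(v:ℂ)) * (Complex.exp (f (-(r:ℂ) + Complex.I * (v:ℂ)))
            - Complex.exp (f ((r:ℂ) + Complex.I * (v:ℂ))))‖
          = ‖Complex.exp (-(v:ℂ))‖ *
            ‖Complex.exp (f (-(r:ℂ) + Complex.I * (v:ℂ)))
              - Complex.exp (f ((r:ℂ) + Complex.I * (v:ℂ)))‖ from norm_mul _ _]
        have he : ‖Complex.exp (-(v:ℂ))‖ = Real.exp (-v) := by
          rw [Complex.norm_exp]; norm_cast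
        rw [he, mul_comm]
        apply mul_le_mul_of_nonneg_right _ (Real.exp_nonneg _)
        have h1 := hfr _ (habs_left v)
        have h2 := hfr _ (habs_right v)
        calc ‖Complex.exp (f (-(r:ℂ) + Complex.I * (v:ℂ)))
              - Complex.exp (f ((r:ℂ) + Complex.I * (v:ℂ)))‖
            ≤ ‖Complex.exp (f (-(r:ℂ) + Complex.I * (v:ℂ))) - 1‖
              + ‖Complex.exp (f ((r:ℂ) + Complex.I * (v:ℂ))) - 1‖ := by
              have h := norm_sub_le_norm_sub_add_norm_sub (Complex.exp (f (-(r:ℂ) + Complex.I * (v:ℂ)))) 1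
                (Complex.exp (f ((r:ℂ) + Complex.I * (v:ℂ))))
              rwa [norm_sub_rev 1] at h
          _ ≤ 2 * ‖f (-(r:ℂ) + Complex.I * (v:ℂ))‖
              + 2 * ‖f ((r:ℂ) + Complex.I * (v:ℂ))‖ := by
              gcongr
              · exact Complex.norm_exp_sub_one_le (le_trans h1 hCr1)
              · exact Complex.norm_exp_sub_one_le (le_trans h2 hCr1)
          _ ≤ 2 * (C / r) + 2 * (C / r) := by gcongr
          _ = 4 * C / r := by ring
      calc ‖∫ v in (0:ℝ)..r,
            (Complex.exp (Complex.I * (-(r:ℂ) + Complex.I * (v:ℂ)) + f (-(r:ℂ) + Complex.I * (v:ℂ)))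
            - Complex.exp (Complex.I * ((r:ℂ) + Complex.I * (v:ℂ)) + f ((r:ℂ) + Complex.I * (v:ℂ))))‖
          ≤ |∫ v in (0:ℝ)..r, (4 * C / r) * Real.exp (-v)| := by
            apply intervalIntegral.norm_integral_le_abs_of_norm_le
            · exact MeasureTheory.ae_of_all _ fun v => hb v
            · exact Continuous.intervalIntegrable (continuous_const.mul (Real.continuous_exp.comp continuous_neg)) _ _
        _ ≤ 4 * C / r := by
            rw [intervalIntegral.integral_const_mul]
            rw [show (∫ v in (0:ℝ)..r, Real.exp (-v)) = Real.exp (-0) - Real.exp (-r) by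
              simp [intervalIntegral.integral_comp_neg fun x => Real.exp x]]
            rw [_root_.abs_of_nonneg]
            · have h1 : Real.exp (-0) - Real.exp (-r) ≤ 1 := by
                simp [Real.exp_nonneg]
              have h2 : 0 ≤ 4 * C / r := by positivity
              exact mul_le_of_le_one_right h2 h1
            · have h3 : Real.exp (-r) ≤ Real.exp (-0) := Real.exp_le_exp.2 (by linarith)
              have h2 : 0 ≤ 4 * C / r := by positivity
              exact mul_nonneg h2 (sub_nonneg.2 h3)
    -- the top bound
    have htop : ‖∫ u in (-r)..r,
          Complex.exp (Complex.I * ((u:ℂ) + Complex.I * (r:ℂ)) + f ((u:ℂ) + Complex.I * (r:ℂ)))‖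
        ≤ Real.exp (C - r) * (2 * r) := by
      have := intervalIntegral.norm_integral_le_of_norm_le_const (C := Real.exp (C - r))
        (f := fun u : ℝ =>
          Complex.exp (Complex.I * ((u:ℂ) + Complex.I * (r:ℂ)) + f ((u:ℂ) + Complex.I * (r:ℂ))))
        (a := -r) (b := r) ?_
      · rw [show |r - (-r)| = 2 * r by rw [_root_.abs_of_nonneg (by linarith : (0:ℝ) ≤ r - (-r))]; ring] at this
        exact this
      · intro u _
        rw [show ‖Complex.exp (Complex.I * ((u:ℂ) + Complex.I * (r:ℂ)) + f ((u:ℂ) + Complex.I * (r:ℂ)))‖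
          = Real.exp ((Complex.I * ((u:ℂ) + Complex.I * (r:ℂ)) + f ((u:ℂ) + Complex.I * (r:ℂ))).re)
          from Complex.norm_exp _]
        apply Real.exp_le_exp.2
        have hre : (Complex.I * ((u:ℂ) + Complex.I * (r:ℂ))).re = -r := by simp
        rw [Complex.add_re, hre]
        have h1 : (f ((u:ℂ) + Complex.I * (r:ℂ))).re ≤ C := by
          calc (f ((u:ℂ) + Complex.I * (r:ℂ))).re
              ≤ ‖f ((u:ℂ) + Complex.I * (r:ℂ))‖ := Complex.re_le_norm _
            _ ≤ C / r := hfr _ (habs_top u)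
            _ ≤ C := by rw [div_le_iff₀ hr0]; nlinarith
        linarith
    -- combine
    rw [show Complex.I * (∫ v in (0:ℝ)..r,
          Complex.exp (Complex.I * (-(r:ℂ) + Complex.I * (v:ℂ)) + f (-(r:ℂ) + Complex.I * (v:ℂ))))
        + (∫ u in (-r)..r,
          Complex.exp (Complex.I * ((u:ℂ) + Complex.I * (r:ℂ)) + f ((u:ℂ) + Complex.I * (r:ℂ))))
        - Complex.I * (∫ v in (0:ℝ)..r,
          Complex.exp (Complex.I * ((r:ℂ) + Complex.I * (v:ℂ)) + f ((r:ℂ) + Complex.I * (v:ℂ))))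
      = Complex.I * ((∫ v in (0:ℝ)..r,
          Complex.exp (Complex.I * (-(r:ℂ) + Complex.I * (v:ℂ)) + f (-(r:ℂ) + Complex.I * (v:ℂ))))
        - (∫ v in (0:ℝ)..r,
          Complex.exp (Complex.I * ((r:ℂ) + Complex.I * (v:ℂ)) + f ((r:ℂ) + Complex.I * (v:ℂ)))))
        + (∫ u in (-r)..r,
          Complex.exp (Complex.I * ((u:ℂ) + Complex.I * (r:ℂ)) + f ((u:ℂ) + Complex.I * (r:ℂ)))) by
      ring]
    calc ‖_ + _‖ ≤ ‖Complex.I * ((∫ v in (0:ℝ)..r,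
          Complex.exp (Complex.I * (-(r:ℂ) + Complex.I * (v:ℂ)) + f (-(r:ℂ) + Complex.I * (v:ℂ))))
        - (∫ v in (0:ℝ)..r,
          Complex.exp (Complex.I * ((r:ℂ) + Complex.I * (v:ℂ)) + f ((r:ℂ) + Complex.I * (v:ℂ)))))‖
        + ‖(∫ u in (-r)..r,
          Complex.exp (Complex.I * ((u:ℂ) + Complex.I * (r:ℂ)) + f ((u:ℂ) + Complex.I * (r:ℂ))))‖ :=
        norm_add_le _ _
      _ ≤ 4 * C / r + Real.exp (C - r) * (2 * r) := by
          apply add_le_add _ htop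
          rw [norm_mul, Complex.norm_I, one_mul]
          exact hvert
  · -- the bound tends to 0
    have hA : Filter.Tendsto (fun n : ℕ => 4 * C / (2 * Real.pi * n)) Filter.atTop (nhds 0) :=
      Filter.Tendsto.div_atTop tendsto_const_nhds hr_top
    have hB : Filter.Tendsto
        (fun n : ℕ => Real.exp (C - 2 * Real.pi * n) * (2 * (2 * Real.pi * n)))
        Filter.atTop (nhds 0) := by
      have h1 : Filter.Tendsto (fun x : ℝ => Real.exp (C - x) * (2 * x)) Filter.atTop (nhds 0) := by
        have h2 := (Real.tendsto_pow_mul_exp_neg_atTop_nhds_zero 1).const_mul (2 * Real.exp C)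
        rw [mul_zero] at h2
        apply h2.congr
        intro x
        rw [Real.exp_sub]
        field_simp [Real.exp_neg]
        simp [mul_assoc, ← Real.exp_add]
      exact h1.comp hr_top
    simpa using hA.add hB
end
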